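/- Let s₁, s₂, s₃ ∈ ℝ satisfy either (i) sᵢ+sⱼ ≥ 0 for all i ≠ j and s₁+s₂+s₃ > 3/2, or (ii) sᵢ+sⱼ > 0 for all i ≠ j and s₁+s₂+s₃ ≥ 3/2. Then the trilinear form b extends continuously to V^{s₁} × V^{s₂+1} × V^{s₃}, and there exists a constant c depending only on s₁, s₂, s₃ such that |b(u,v,w)| ≤ c ‖u‖_{s₁} ‖v‖_{s₂+1} ‖w‖_{s₃} for all u ∈ V^{s₁}, v ∈ V^{s₂+1}, w ∈ V^{s₃}. -/

import Mathlib

/-!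
Common setting for the 3D Navier-Stokes equations with constant delay on the torus `𝕋³_L`
(Bessaih, Garrido-Atienza, "Longtime behavior for 3D Navier-Stokes equations with constant
delays").

A divergence-free, mean-zero, `L`-periodic vector field is described through its Fourier
coefficients `û(ζ)`, `ζ = (2π/L)k`, `k ∈ ℤ³`; the spaces `V^s` and the various operators
(`A = -Δ`, the trilinear form `b`, the bilinear operator `B`) are expressed in Fourier modes.
-/

open MeasureTheory Filter

noncomputable section

namespace NS3D

/-- Fourier lattice `ℤ³` indexing the Fourier modes of `L`-periodic fields. -/
abbrev K3 : Type := Fin 3 → ℤ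

/-- A (generalized) vector field on the torus, given by the family of its Fourier
coefficients, indexed by `k ∈ ℤ³` (the frequency being `ζ = (2π/L)k`). -/
abbrev Coeff : Type := K3 → Fin 3 → ℂ

/-- The frequency `ζ = (2π/L) k`. -/
def zeta (L : ℝ) (k : K3) (i : Fin 3) : ℝ := 2 * Real.pi / L * (k i : ℝ)

/-- `|ζ|²`. -/
def zetaNormSq (L : ℝ) (k : K3) : ℝ := ∑ i, zeta L k i ^ 2

/-- `|ζ|`. -/
def zetaNorm (L : ℝ) (k : K3) : ℝ := Real.sqrt (zetaNormSq L k)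

/-- `|û(ζ)|²`. -/
def coefNormSq (c : Fin 3 → ℂ) : ℝ := ∑ i, ‖c i‖ ^ 2

/-- The square `‖u‖_s² = Σ_{ζ≠0} |ζ|^{2s} |û(ζ)|²` of the `V^s` norm. -/
def normVsq (L s : ℝ) (u : Coeff) : ℝ := ∑' k : K3, zetaNorm L k ^ (2 * s) * coefNormSq (u k)

/-- The `V^s` norm. -/
def normV (L s : ℝ) (u : Coeff) : ℝ := Real.sqrt (normVsq L s u)

/-- Membership in `V^s`: mean zero, divergence free, real valued (û(ζ) = conj û(-ζ)),
and finite `V^s` norm. -/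
structure MemV (L s : ℝ) (u : Coeff) : Prop where
  mean_zero : u 0 = 0
  div_free : ∀ k : K3, ∑ j, (zeta L k j : ℂ) * u k j = 0
  reality : ∀ (k : K3) (i : Fin 3), u (-k) i = (starRingEnd ℂ) (u k i)
  norm_summable : Summable fun k : K3 => zetaNorm L k ^ (2 * s) * coefNormSq (u k)

/-- The duality pairing `⟨f,g⟩ = L³ Σ_ζ f̂(ζ)·conj(ĝ(ζ))` between `V^{-s}` and `V^s`
(for real fields it coincides with `∫ f·g dx`). -/
def pairing (L : ℝ) (f g : Coeff) : ℂ :=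
  (L : ℂ) ^ 3 * ∑' k : K3, ∑ i, f k i * (starRingEnd ℂ) (g k i)

/-- The trilinear form `b(u,v,w) = Σ_{i,j} ∫_{𝕋³_L} u_j (∂v_i/∂x_j) w_i dx`,
written in Fourier modes. -/
def btri (L : ℝ) (u v w : Coeff) : ℂ :=
  (L : ℂ) ^ 3 * ∑' (k : K3) (m : K3), ∑ i, ∑ j,
    u k j * (Complex.I * (zeta L m j : ℂ)) * v m i * w (-(k + m)) i

/-- The Stokes operator `A = -Δ`: multiplication by `|ζ|²` in Fourier modes. -/
def Aop (L : ℝ) (u : Coeff) : Coeff := fun k i => (zetaNormSq L k : ℂ) * u k i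

/-- The first (smallest) eigenvalue `λ = (2π/L)²` of the Stokes operator `A`. -/
def lam (L : ℝ) : ℝ := (2 * Real.pi / L) ^ 2

/-- The Leray (Helmholtz) projection onto divergence-free, mean-zero fields. -/
def leray (L : ℝ) (c : Coeff) : Coeff := fun k i =>
  if k = 0 then 0
  else c k i - (zeta L k i : ℂ) * (∑ j, (zeta L k j : ℂ) * c k j) / (zetaNormSq L k : ℂ)

/-- The bilinear operator `B(u,v)` (the Leray projection of `(u·∇)v`), characterized by
`⟨B(u,v),w⟩ = b(u,v,w)` for divergence-free `w`. -/
def Bop (L : ℝ) (u v : Coeff) : Coeff :=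
  leray L fun n i => ∑' m : K3, ∑ j, u (n - m) j * (Complex.I * (zeta L m j : ℂ)) * v m i

/-- `u ∈ L₂(a,b,V^s)`. -/
def MemL2V (L a b s : ℝ) (u : ℝ → Coeff) : Prop :=
  (∀ᵐ t ∂(volume.restrict (Set.Ioo a b)), MemV L s (u t)) ∧
    IntegrableOn (fun t => normVsq L s (u t)) (Set.Ioo a b)

/-- `u ∈ L_∞(a,b,V^s)`. -/
def MemLinftyV (L a b s : ℝ) (u : ℝ → Coeff) : Prop :=
  (∀ᵐ t ∂(volume.restrict (Set.Ioo a b)), MemV L s (u t)) ∧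
    ∃ C : ℝ, ∀ᵐ t ∂(volume.restrict (Set.Ioo a b)), normV L s (u t) ≤ C

/-- `u ∈ C([a,b],V^s)`. -/
def ContOnV (L a b s : ℝ) (u : ℝ → Coeff) : Prop :=
  (∀ t ∈ Set.Icc a b, MemV L s (u t)) ∧
    ∀ t ∈ Set.Icc a b, ∀ ε > 0, ∃ δ > 0, ∀ t' ∈ Set.Icc a b,
      |t' - t| < δ → normV L s (u t' - u t) < ε

/-- `u ∈ C^β([a,b],V^s)` (Hölder continuity). -/
def HolderOnV (L a b β s : ℝ) (u : ℝ → Coeff) : Prop :=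
  ∃ C : ℝ, 0 ≤ C ∧ ∀ t₁ ∈ Set.Icc a b, ∀ t₂ ∈ Set.Icc a b,
    normV L s (u t₂ - u t₁) ≤ C * |t₂ - t₁| ^ β

/-- Smooth real test functions compactly supported in `(a,b)`. -/
def TestOn (a b : ℝ) (φ : ℝ → ℝ) : Prop :=
  (∀ n : ℕ, ContDiff ℝ n φ) ∧ ∀ t, t ∉ Set.Ioo a b → φ t = 0

/-- `u` is a weak solution on `[0,μ]` of the linearized system
`du + (ν A u + B(ψ(t),u)) dt = f dt`, `u(0) = u₀`. -/
def IsLinSol (L ν μ α : ℝ) (f : Coeff) (ψ : ℝ → Coeff) (u0 : Coeff) (u : ℝ → Coeff) : Prop :=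
  MemL2V L 0 μ (1 + α) u ∧ u 0 = u0 ∧
    ∀ v : Coeff, MemV L (α + 1) v → ∀ φ : ℝ → ℝ, TestOn 0 μ φ →
      (-(∫ r in Set.Ioo 0 μ, Complex.ofReal (deriv φ r) * pairing L (u r) v))
          + (ν : ℂ) * (∫ r in Set.Ioo 0 μ, Complex.ofReal (φ r) * pairing L (Aop L (u r)) v)
          + (∫ r in Set.Ioo 0 μ, Complex.ofReal (φ r) * pairing L (Bop L (ψ r) (u r)) v)
        = ∫ r in Set.Ioo 0 μ, Complex.ofReal (φ r) * pairing L f v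

/-- `u` is a weak solution on `[-μ,T]` of the delayed 3D Navier-Stokes system
`du + (ν A u(t) + B(u(t-μ),u(t))) dt = f dt`, `u(0) = u₀`, `u = φ₀` on `[-μ,0)`. -/
def IsDelaySol (L ν μ α T : ℝ) (f : Coeff) (φ0 : ℝ → Coeff) (u0 : Coeff) (u : ℝ → Coeff) :
    Prop :=
  MemL2V L (-μ) T (1 + α) u ∧ u 0 = u0 ∧ (∀ t, -μ ≤ t → t < 0 → u t = φ0 t) ∧
    ∀ v : Coeff, MemV L (α + 1) v → ∀ φ : ℝ → ℝ, TestOn 0 T φ →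
      (-(∫ r in Set.Ioo 0 T, Complex.ofReal (deriv φ r) * pairing L (u r) v))
          + (ν : ℂ) * (∫ r in Set.Ioo 0 T, Complex.ofReal (φ r) * pairing L (Aop L (u r)) v)
          + (∫ r in Set.Ioo 0 T, Complex.ofReal (φ r) * pairing L (Bop L (u (r - μ)) (u r)) v)
        = ∫ r in Set.Ioo 0 T, Complex.ofReal (φ r) * pairing L f v

/-- Elements of the phase spaces `X^μ_α = L₂(0,μ,V^{1+α}) × V^α` and
`Y^μ_α = L₂(-μ,0,V^{1+α}) × V^α`: a path together with a field. -/
abbrev PP : Type := (ℝ → Coeff) × Coeff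

/-- The distance of the product space `L₂(a,b,V^{1+α}) × V^α`. -/
def distP (L α a b : ℝ) (p q : PP) : ℝ :=
  Real.sqrt ((∫ t in Set.Ioo a b, normVsq L (1 + α) (p.1 t - q.1 t)) + normVsq L α (p.2 - q.2))

/-- Membership in the closed ball `B_{L₂(a,b,V^{1+α})}(0,R) × B_{V^α}(0,ρ)`. -/
def InBall (L α a b R ρ : ℝ) (p : PP) : Prop :=
  MemL2V L a b (1 + α) p.1 ∧ MemV L α p.2 ∧
    (∫ t in Set.Ioo a b, normVsq L (1 + α) (p.1 t)) ≤ R ^ 2 ∧ normV L α p.2 ≤ ρ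

/-- `c` is a constant for the trilinear estimate with exponents `(s₁,s₂,s₃)`:
`|b(u,v,w)| ≤ c ‖u‖_{s₁} ‖v‖_{s₂+1} ‖w‖_{s₃}`. -/
def TriBound (L s1 s2 s3 c : ℝ) : Prop :=
  ∀ u v w : Coeff, MemV L s1 u → MemV L (s2 + 1) v → MemV L s3 w →
    ‖btri L u v w‖ ≤ c * normV L s1 u * normV L (s2 + 1) v * normV L s3 w

/-- Condition `-νλμ/2 + c²R²/ν < -ln 2`. -/
def Cond1 (L ν μ c R : ℝ) : Prop :=
  -(ν * lam L * μ) / 2 + c ^ 2 * R ^ 2 / ν < -Real.log 2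

/-- The smallness condition
`(8/(ν²λ))‖f‖²_{α-1} e^{νλμ/2}(2/ν + (2c²R²/ν²)(e^{c²R²/ν} + 1/2) + λμe^{-νλμ/2}/2) ≤ R²/2`. -/
def Cond2 (L ν μ α c R : ℝ) (f : Coeff) : Prop :=
  8 / (ν ^ 2 * lam L) * normVsq L (α - 1) f * Real.exp (ν * lam L * μ / 2) *
      (2 / ν + 2 * c ^ 2 * R ^ 2 / ν ^ 2 * (Real.exp (c ^ 2 * R ^ 2 / ν) + 1 / 2)
        + lam L * μ * Real.exp (-(ν * lam L * μ) / 2) / 2)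
    ≤ R ^ 2 / 2

/-- `ρ² = (8/(ν²λ)) ‖f‖²_{α-1} e^{νλμ/2}`. -/
def RhoEq (L ν μ α ρ : ℝ) (f : Coeff) : Prop :=
  ρ ^ 2 = 8 / (ν ^ 2 * lam L) * normVsq L (α - 1) f * Real.exp (ν * lam L * μ / 2)

/-- `U` is the one-step solution map `U(ψ,u₀) = (u, u(μ))` of the linearized system, where
`u` is the (unique, continuous) weak solution with drift `ψ` and initial value `u₀`. -/
def IsUmap (L ν μ α : ℝ) (f : Coeff) (U : PP → PP) : Prop :=
  ∀ p : PP, MemL2V L 0 μ (1 + α) p.1 → MemV L α p.2 →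
    ∃ u : ℝ → Coeff, IsLinSol L ν μ α f p.1 p.2 u ∧ ContOnV L 0 μ α u ∧ U p = (u, u μ)

/-- `S` is the solution semiflow `S(t)(φ,u₀) = ((u^μ)_t, u^μ(t))` of the delayed system,
where `u^μ` is the (unique, continuous) weak solution with history `φ` and initial value
`u₀`, and `(u^μ)_t(s) = u^μ(t+s)`. -/
def IsSmap (L ν μ α : ℝ) (f : Coeff) (S : ℝ → PP → PP) : Prop :=
  ∀ p : PP, MemL2V L (-μ) 0 (1 + α) p.1 → MemV L α p.2 →
    ∃ u : ℝ → Coeff, (∀ T, 0 < T → IsDelaySol L ν μ α T f p.1 p.2 u) ∧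
      (∀ T, 0 < T → ContOnV L 0 T α u) ∧
      ∀ t, 0 ≤ t → S t p = (fun s => u (t + s), u t)

/-- Sequential compactness of a set with respect to the pseudometric `distP`. -/
def SeqCompactP (L α a b : ℝ) (A : Set PP) : Prop :=
  ∀ x : ℕ → PP, (∀ n, x n ∈ A) →
    ∃ φ : ℕ → ℕ, StrictMono φ ∧ ∃ p ∈ A,
      Tendsto (fun n => distP L α a b (x (φ n)) p) atTop (nhds 0)

/-- `A ⊆ B` up to the identification given by the pseudometric `distP`. -/
def SubsetP (L α a b : ℝ) (A B : Set PP) : Prop :=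
  ∀ p ∈ A, ∃ q ∈ B, distP L α a b p q = 0

/-- `A = B` up to the identification given by the pseudometric `distP`. -/
def SetEqP (L α a b : ℝ) (A B : Set PP) : Prop :=
  SubsetP L α a b A B ∧ SubsetP L α a b B A

/-- `p` lies in the `distP`-closure of `A`. -/
def InClosureP (L α a b : ℝ) (A : Set PP) (p : PP) : Prop :=
  ∀ ε > 0, ∃ q ∈ A, distP L α a b p q < ε

section AuxTrilinear
open ENNReal

def Nk (k : K3) : ℝ := Real.sqrt (∑ i, ((k i : ℝ))^2)

def nsq (k : K3) : ℕ := ∑ i, (k i).natAbs ^ 2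

def dsh (k : K3) : ℕ := Nat.log 4 (nsq k)

lemma Nk_nonneg (k : K3) : 0 ≤ Nk k := Real.sqrt_nonneg _

lemma nsq_cast (k : K3) : ((nsq k : ℝ)) = ∑ i, ((k i : ℝ))^2 := by
  rw [nsq]
  push_cast
  refine Finset.sum_congr rfl fun i _ => ?_
  rw [Nat.cast_natAbs, Int.cast_abs, sq_abs]

lemma Nk_eq_sqrt_nsq (k : K3) : Nk k = Real.sqrt (nsq k) := by rw [Nk, nsq_cast]

lemma one_le_nsq {k : K3} (hk : k ≠ 0) : 1 ≤ nsq k := by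
  have : ∃ i, k i ≠ 0 := by
    by_contra h
    push_neg at h
    exact hk (funext fun i => h i)
  obtain ⟨i, hi⟩ := this
  have h1 : 1 ≤ (k i).natAbs ^ 2 := Nat.one_le_iff_ne_zero.2 (by
    simp [pow_eq_zero_iff, Int.natAbs_eq_zero, hi])
  calc 1 ≤ (k i).natAbs ^ 2 := h1
    _ ≤ _ := Finset.single_le_sum (f := fun i => (k i).natAbs ^ 2)
        (fun _ _ => Nat.zero_le _) (Finset.mem_univ i)

lemma one_le_Nk {k : K3} (hk : k ≠ 0) : 1 ≤ Nk k := by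
  rw [Nk_eq_sqrt_nsq]
  have h := one_le_nsq hk
  have h' : (1:ℝ) ≤ (nsq k : ℝ) := by exact_mod_cast h
  calc (1:ℝ) = Real.sqrt 1 := by simp
    _ ≤ _ := Real.sqrt_le_sqrt h'

def emap (k : K3) : EuclideanSpace ℝ (Fin 3) := WithLp.toLp 2 (fun i => (k i : ℝ))

lemma norm_emap (k : K3) : ‖emap k‖ = Nk k := by
  rw [EuclideanSpace.norm_eq, Nk]
  congr 1
  refine Finset.sum_congr rfl fun i _ => ?_
  have : emap k i = (k i : ℝ) := rfl
  rw [this, Real.norm_eq_abs, sq_abs]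

lemma Nk_triangle (k m : K3) : Nk (k + m) ≤ Nk k + Nk m := by
  have h : emap (k + m) = emap k + emap m := by
    ext i
    show ((k i + m i : ℤ) : ℝ) = (k i : ℝ) + (m i : ℝ)
    push_cast; ring
  rw [← norm_emap, ← norm_emap, ← norm_emap, h]
  exact norm_add_le _ _

lemma Nk_neg (k : K3) : Nk (-k) = Nk k := by
  rw [Nk, Nk]
  congr 1
  refine Finset.sum_congr rfl fun i _ => ?_
  show (((-k) i : ℤ) : ℝ)^2 = _
  simp

lemma shell_le {k : K3} (hk : k ≠ 0) : (2:ℝ)^(dsh k) ≤ Nk k := by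
  rw [Nk_eq_sqrt_nsq]
  have h4 : (4:ℕ)^(dsh k) ≤ nsq k := Nat.pow_log_le_self 4 (by
    have := one_le_nsq hk; omega)
  have hsq : ((4:ℕ)^(dsh k):ℝ) = ((2:ℝ)^(dsh k))^2 := by
    push_cast
    rw [show ((4:ℝ)) = 2^2 by norm_num, ← pow_mul, ← pow_mul, mul_comm]
  calc (2:ℝ)^(dsh k) = Real.sqrt (((2:ℝ)^(dsh k))^2) := (Real.sqrt_sq (by positivity)).symm
    _ ≤ _ := Real.sqrt_le_sqrt (by rw [← hsq]; exact_mod_cast h4)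

lemma shell_lt (k : K3) : Nk k < (2:ℝ)^(dsh k + 1) := by
  rw [Nk_eq_sqrt_nsq]
  have h4 : nsq k < (4:ℕ)^(dsh k + 1) := Nat.lt_pow_succ_log_self (by norm_num) _
  have h2 : ((2:ℝ)^(dsh k + 1))^2 = ((4:ℕ)^(dsh k+1) : ℝ) := by
    rw [← pow_mul]; push_cast
    rw [show ((4:ℝ)) = 2^2 by norm_num, ← pow_mul]; ring_nf
  have : (nsq k : ℝ) < ((2:ℝ)^(dsh k + 1))^2 := by rw [h2]; exact_mod_cast h4
  nlinarith [Real.sq_sqrt (by positivity : (0:ℝ) ≤ (nsq k:ℝ)),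
    Real.sqrt_nonneg ((nsq k:ℝ)), pow_pos (by norm_num : (0:ℝ) < 2) (dsh k + 1)]



lemma ecs {ι : Type*} (f g : ι → ℝ≥0∞) :
    ∑' i, f i * g i ≤ (∑' i, f i ^ (2:ℝ)) ^ ((1:ℝ)/2) * (∑' i, g i ^ (2:ℝ)) ^ ((1:ℝ)/2) := by
  letI : MeasurableSpace ι := ⊤
  haveI : MeasurableSingletonClass ι := ⟨fun _ => trivial⟩
  have hpq : Real.HolderConjugate 2 2 := Real.HolderConjugate.two_two
  have h := ENNReal.lintegral_mul_le_Lp_mul_Lq (Measure.count (α := ι)) hpq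
    (measurable_from_top (f := f)).aemeasurable (measurable_from_top (f := g)).aemeasurable
  simpa [lintegral_count, Pi.mul_apply] using h

/-- l2 norm of an ennreal sequence -/
def l2 {ι : Type*} (f : ι → ℝ≥0∞) : ℝ≥0∞ := (∑' i, f i ^ (2:ℝ)) ^ ((1:ℝ)/2)

lemma ecs' {ι : Type*} (f g : ι → ℝ≥0∞) : ∑' i, f i * g i ≤ l2 f * l2 g := ecs f g

lemma le_l2 {ι : Type*} (f : ι → ℝ≥0∞) (i : ι) : f i ≤ l2 f := by
  have h1 : f i ^ (2:ℝ) ≤ ∑' j, f j ^ (2:ℝ) := ENNReal.le_tsum i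
  have h2 := ENNReal.rpow_le_rpow h1 (by norm_num : (0:ℝ) ≤ 1/2)
  rwa [← ENNReal.rpow_mul, show (2:ℝ) * (1/2) = 1 by norm_num, ENNReal.rpow_one] at h2

lemma l2_shift {γ : ℕ → ℝ≥0∞} (j : ℕ) : l2 (fun q => γ (q + j)) ≤ l2 γ := by
  refine ENNReal.rpow_le_rpow ?_ (by norm_num)
  exact ENNReal.tsum_comp_le_tsum_of_injective (add_left_injective j) _

lemma two_rpow_ne_top {x : ℝ} : (2:ℝ≥0∞) ^ x ≠ ⊤ := by
  rw [Ne, ENNReal.rpow_eq_top_iff]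
  push_neg
  constructor
  · rintro h; norm_num at h
  · rintro h; norm_num at h

lemma geom_ne_top {θ : ℝ} (hθ : θ < 0) : ∑' p : ℕ, (2:ℝ≥0∞) ^ (θ * p) ≠ ⊤ := by
  have hr : (2:ℝ≥0∞) ^ θ < 1 := by
    apply ENNReal.rpow_lt_one_of_one_lt_of_neg (by norm_num) hθ
  have heq : ∀ p : ℕ, (2:ℝ≥0∞) ^ (θ * p) = ((2:ℝ≥0∞) ^ θ) ^ (p:ℕ) := by
    intro p
    rw [ENNReal.rpow_mul, ← ENNReal.rpow_natCast ((2:ℝ≥0∞)^θ) p]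
  rw [tsum_congr heq, ENNReal.tsum_geometric]
  simp [ENNReal.inv_ne_top]
  exact (tsub_pos_of_lt hr).ne'

/-- geometric-weighted l1 bound -/
lemma geom_l1 {θ : ℝ} (hθ : θ < 0) (α : ℕ → ℝ≥0∞) :
    ∑' p : ℕ, (2:ℝ≥0∞) ^ (θ * p) * α p ≤
      ((∑' p : ℕ, (2:ℝ≥0∞) ^ (2 * θ * p)) ^ ((1:ℝ)/2)) * l2 α := by
  have h := ecs (fun p : ℕ => (2:ℝ≥0∞) ^ (θ * p)) α
  have he : ∀ p : ℕ, ((2:ℝ≥0∞) ^ (θ * p)) ^ (2:ℝ) = (2:ℝ≥0∞) ^ (2 * θ * p) := by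
    intro p
    rw [← ENNReal.rpow_mul]
    ring_nf
  rw [tsum_congr he] at h
  exact h



lemma indic_sq {P : Prop} [Decidable P] :
    ((if P then (1:ℝ≥0∞) else 0)) ^ (2:ℝ) = (if P then (1:ℝ≥0∞) else 0) := by
  by_cases h : P <;> simp [h, ENNReal.zero_rpow_of_pos]

lemma tsum_indic_le (q : ℕ) :
    ∑' p : ℕ, (if p ≤ q then (1:ℝ≥0∞) else 0) = (q:ℝ≥0∞) + 1 := by
  rw [tsum_eq_sum (s := Finset.range (q+1)) (by
    intro p hp
    rw [if_neg]
    simpa using fun h => hp (Finset.mem_range.2 (Nat.lt_succ_of_le h)))]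
  rw [Finset.sum_congr rfl (fun p hp => if_pos (Nat.lt_succ_iff.1 (Finset.mem_range.1 hp)))]
  simp [Finset.sum_const, Finset.card_range]

lemma lemD {θ κ : ℝ} (hκ : 0 ≤ κ) (hθκ : θ ≤ κ) (hθ0 : θ = 0 → 0 < κ) :
    ∃ C : ℝ≥0∞, C ≠ ⊤ ∧ ∀ α β γ : ℕ → ℝ≥0∞,
      ∑' (p : ℕ) (q : ℕ), (if p ≤ q then (1:ℝ≥0∞) else 0) * (2:ℝ≥0∞) ^ (θ * p - κ * q)
          * (α p * (β q * γ q))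
        ≤ C * (l2 α * (l2 β * l2 γ)) := by
  rcases lt_trichotomy θ 0 with hθ | hθ | hθ
  · -- θ < 0
    refine ⟨(∑' p:ℕ, (2:ℝ≥0∞)^(2*θ*(p:ℕ)))^((1:ℝ)/2),
      ENNReal.rpow_ne_top_of_nonneg (by norm_num) (geom_ne_top (by linarith)), fun α β γ => ?_⟩
    have step1 : ∀ p : ℕ, (∑' q : ℕ, (if p ≤ q then (1:ℝ≥0∞) else 0) * (2:ℝ≥0∞) ^ (θ * p - κ * q)
        * (α p * (β q * γ q))) ≤ ((2:ℝ≥0∞)^(θ*(p:ℕ)) * α p) * ∑' q : ℕ, β q * γ q := by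
      intro p
      rw [← ENNReal.tsum_mul_left]
      refine ENNReal.tsum_le_tsum fun q => ?_
      have h1 : (if p ≤ q then (1:ℝ≥0∞) else 0) ≤ 1 := by split <;> simp
      have h2 : (2:ℝ≥0∞) ^ (θ * p - κ * q) ≤ (2:ℝ≥0∞)^(θ*(p:ℕ)) :=
        ENNReal.rpow_le_rpow_of_exponent_le (by norm_num)
          (by nlinarith [Nat.cast_nonneg (α := ℝ) q])
      calc (if p ≤ q then (1:ℝ≥0∞) else 0) * (2:ℝ≥0∞) ^ (θ * p - κ * q) * (α p * (β q * γ q))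
          ≤ 1 * (2:ℝ≥0∞)^(θ*(p:ℕ)) * (α p * (β q * γ q)) := by
            exact mul_le_mul' (mul_le_mul' h1 h2) le_rfl
        _ = (2:ℝ≥0∞) ^ (θ*(p:ℕ)) * α p * (β q * γ q) := by ring
    calc ∑' (p : ℕ) (q : ℕ), (if p ≤ q then (1:ℝ≥0∞) else 0) * (2:ℝ≥0∞) ^ (θ * p - κ * q)
          * (α p * (β q * γ q))
        ≤ ∑' p : ℕ, ((2:ℝ≥0∞)^(θ*(p:ℕ)) * α p) * ∑' q : ℕ, β q * γ q :=
          ENNReal.tsum_le_tsum step1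
      _ = (∑' p : ℕ, (2:ℝ≥0∞)^(θ*(p:ℕ)) * α p) * ∑' q : ℕ, β q * γ q :=
          ENNReal.tsum_mul_right
      _ ≤ ((∑' p:ℕ, (2:ℝ≥0∞)^(2*θ*(p:ℕ)))^((1:ℝ)/2) * l2 α) * (l2 β * l2 γ) :=
          mul_le_mul' (geom_l1 hθ α) (ecs' β γ)
      _ = _ := by ring
  · -- θ = 0
    subst hθ
    have hκ' : 0 < κ := hθ0 rfl
    refine ⟨∑' q:ℕ, ((q:ℝ≥0∞)+1)^((1:ℝ)/2) * (2:ℝ≥0∞)^(-(κ*(q:ℕ))), ?_, fun α β γ => ?_⟩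
    · -- finiteness
      have hb : ∀ q : ℕ, ((q:ℝ≥0∞)+1)^((1:ℝ)/2) * (2:ℝ≥0∞)^(-(κ*(q:ℕ)))
          ≤ ENNReal.ofReal (((q:ℝ)+1) * (2:ℝ)^(-(κ*(q:ℕ)))) := by
        intro q
        have h1 : ((q:ℝ≥0∞)+1)^((1:ℝ)/2) ≤ ((q:ℝ≥0∞)+1) := by
          calc ((q:ℝ≥0∞)+1)^((1:ℝ)/2) ≤ ((q:ℝ≥0∞)+1)^(1:ℝ) :=
            ENNReal.rpow_le_rpow_of_exponent_le (by simp) (by norm_num)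
          _ = _ := ENNReal.rpow_one _
        have h2 : ((q:ℝ≥0∞)+1) = ENNReal.ofReal ((q:ℝ)+1) := by
          rw [ENNReal.ofReal_add (by positivity) (by norm_num)]
          simp
        have h3 : (2:ℝ≥0∞)^(-(κ*(q:ℕ))) = ENNReal.ofReal ((2:ℝ)^(-(κ*(q:ℕ)))) := by
          rw [← ENNReal.ofReal_rpow_of_pos (by norm_num)]
          norm_num
        rw [ENNReal.ofReal_mul (by positivity), ← h2, ← h3]
        exact mul_le_mul' h1 le_rfl
      refine ne_top_of_le_ne_top ?_ (ENNReal.tsum_le_tsum hb)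
      have hsum : Summable (fun q : ℕ => ((q:ℝ)+1) * (2:ℝ)^(-(κ*(q:ℕ)))) := by
        have hr : |(2:ℝ)^(-κ)| < 1 := by
          rw [abs_of_nonneg (by positivity)]
          exact Real.rpow_lt_one_of_one_lt_of_neg (by norm_num) (by linarith)
        have heq : ∀ q : ℕ, ((q:ℝ)+1) * (2:ℝ)^(-(κ*(q:ℕ))) = ((q:ℝ)+1) * ((2:ℝ)^(-κ))^q := by
          intro q
          rw [← Real.rpow_natCast ((2:ℝ)^(-κ)) q, ← Real.rpow_mul (by norm_num)]
          ring_nf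
        rw [funext heq]
        have h1 : Summable (fun q : ℕ => (q:ℝ) * ((2:ℝ)^(-κ))^q) := by
          simpa using summable_pow_mul_geometric_of_norm_lt_one 1 hr
        have h2 : Summable (fun q : ℕ => ((2:ℝ)^(-κ))^q) :=
          summable_geometric_of_lt_one (by positivity) (by rwa [abs_of_nonneg (by positivity)] at hr)
        simpa [add_mul] using h1.add h2
      rw [← ofReal_tsum_of_nonneg (fun q => by positivity) hsum]
      exact ENNReal.ofReal_ne_top
    · rw [ENNReal.tsum_comm]
      have step1 : ∀ q : ℕ, (∑' p : ℕ, (if p ≤ q then (1:ℝ≥0∞) else 0)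
            * (2:ℝ≥0∞) ^ (0 * p - κ * q) * (α p * (β q * γ q)))
          ≤ (((q:ℝ≥0∞)+1)^((1:ℝ)/2) * (2:ℝ≥0∞)^(-(κ*(q:ℕ)))) * (l2 α * (l2 β * l2 γ)) := by
        intro q
        have hexp : (0 * (Nat.cast (R := ℝ)) · - κ * q) = _ := rfl
        have hterm : ∀ p : ℕ, (if p ≤ q then (1:ℝ≥0∞) else 0)
              * (2:ℝ≥0∞) ^ (0 * (p:ℝ) - κ * q) * (α p * (β q * γ q))
            = ((2:ℝ≥0∞)^(-(κ*(q:ℕ))) * (β q * γ q)) * ((if p ≤ q then (1:ℝ≥0∞) else 0) * α p) := by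
          intro p
          have : (0 * (p:ℝ) - κ * q) = -(κ*(q:ℕ)) := by ring
          rw [this]; ring
        rw [tsum_congr hterm, ENNReal.tsum_mul_left]
        have hin : ∑' p : ℕ, (if p ≤ q then (1:ℝ≥0∞) else 0) * α p
            ≤ ((q:ℝ≥0∞)+1)^((1:ℝ)/2) * l2 α := by
          refine (ecs (fun p => if p ≤ q then (1:ℝ≥0∞) else 0) α).trans ?_
          rw [tsum_congr (fun p => indic_sq), tsum_indic_le q]
          rfl
        have hβγ : β q * γ q ≤ l2 β * l2 γ := mul_le_mul' (le_l2 β q) (le_l2 γ q)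
        calc (2:ℝ≥0∞)^(-(κ*(q:ℕ))) * (β q * γ q) * (∑' p : ℕ, (if p ≤ q then (1:ℝ≥0∞) else 0) * α p)
            ≤ (2:ℝ≥0∞)^(-(κ*(q:ℕ))) * (l2 β * l2 γ) * (((q:ℝ≥0∞)+1)^((1:ℝ)/2) * l2 α) := by
              exact mul_le_mul' (mul_le_mul' le_rfl hβγ) hin
          _ = (((q:ℝ≥0∞)+1)^((1:ℝ)/2) * (2:ℝ≥0∞)^(-(κ*(q:ℕ)))) * (l2 α * (l2 β * l2 γ)) := by ring
      calc ∑' (q : ℕ) (p : ℕ), (if p ≤ q then (1:ℝ≥0∞) else 0)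
            * (2:ℝ≥0∞) ^ (0 * p - κ * q) * (α p * (β q * γ q))
          ≤ ∑' q : ℕ, (((q:ℝ≥0∞)+1)^((1:ℝ)/2) * (2:ℝ≥0∞)^(-(κ*(q:ℕ)))) * (l2 α * (l2 β * l2 γ)) :=
            ENNReal.tsum_le_tsum step1
        _ = _ := ENNReal.tsum_mul_right
  · -- θ > 0
    refine ⟨(∑' j:ℕ, (2:ℝ≥0∞)^((-2*θ)*(j:ℕ)))^((1:ℝ)/2),
      ENNReal.rpow_ne_top_of_nonneg (by norm_num) (geom_ne_top (by linarith)), fun α β γ => ?_⟩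
    rw [ENNReal.tsum_comm]
    set C0 : ℝ≥0∞ := (∑' j:ℕ, (2:ℝ≥0∞)^((-2*θ)*(j:ℕ)))^((1:ℝ)/2) with hC0
    have step1 : ∀ q : ℕ, (∑' p : ℕ, (if p ≤ q then (1:ℝ≥0∞) else 0)
          * (2:ℝ≥0∞) ^ (θ * p - κ * q) * (α p * (β q * γ q)))
        ≤ (β q * γ q) * (C0 * l2 α) := by
      intro q
      have hterm : ∀ p : ℕ, (if p ≤ q then (1:ℝ≥0∞) else 0)
            * (2:ℝ≥0∞) ^ (θ * (p:ℝ) - κ * q) * (α p * (β q * γ q))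
          ≤ (β q * γ q) * (((if p ≤ q then (1:ℝ≥0∞) else 0) * (2:ℝ≥0∞)^(θ*((p:ℝ) - q))) * α p) := by
        intro p
        have h2 : (2:ℝ≥0∞) ^ (θ * (p:ℝ) - κ * q) ≤ (2:ℝ≥0∞)^(θ*((p:ℝ) - q)) := by
          refine ENNReal.rpow_le_rpow_of_exponent_le (by norm_num) ?_
          have : θ * (q:ℝ) ≤ κ * q := by
            exact mul_le_mul_of_nonneg_right hθκ (Nat.cast_nonneg q)
          linarith [this]
        calc (if p ≤ q then (1:ℝ≥0∞) else 0) * (2:ℝ≥0∞) ^ (θ * (p:ℝ) - κ * q) * (α p * (β q * γ q))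
            ≤ (if p ≤ q then (1:ℝ≥0∞) else 0) * (2:ℝ≥0∞)^(θ*((p:ℝ) - q)) * (α p * (β q * γ q)) :=
              mul_le_mul' (mul_le_mul' le_rfl h2) le_rfl
          _ = _ := by ring
      refine (ENNReal.tsum_le_tsum hterm).trans ?_
      rw [ENNReal.tsum_mul_left]
      refine mul_le_mul' le_rfl ?_
      -- Cauchy-Schwarz in p
      refine (ecs (fun p => (if p ≤ q then (1:ℝ≥0∞) else 0) * (2:ℝ≥0∞)^(θ*((p:ℝ) - q))) α).trans ?_
      refine mul_le_mul' ?_ le_rfl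
      rw [hC0]
      refine ENNReal.rpow_le_rpow ?_ (by norm_num)
      have hsq : ∀ p : ℕ, ((if p ≤ q then (1:ℝ≥0∞) else 0) * (2:ℝ≥0∞)^(θ*((p:ℝ) - q))) ^ (2:ℝ)
          = (if p ≤ q then (1:ℝ≥0∞) else 0) * (2:ℝ≥0∞)^((2*θ)*((p:ℝ) - q)) := by
        intro p
        rw [ENNReal.mul_rpow_of_nonneg _ _ (by norm_num : (0:ℝ) ≤ 2), indic_sq,
          ← ENNReal.rpow_mul]
        ring_nf
      rw [tsum_congr hsq]
      rw [tsum_eq_sum (s := Finset.range (q+1)) (by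
        intro p hp
        rw [if_neg, zero_mul]
        simpa using fun h => hp (Finset.mem_range.2 (Nat.lt_succ_of_le h)))]
      rw [Finset.sum_congr rfl (fun p hp =>
        by rw [if_pos (Nat.lt_succ_iff.1 (Finset.mem_range.1 hp)), one_mul])]
      rw [← Finset.sum_range_reflect]
      have hcong : ∀ j ∈ Finset.range (q+1),
          (2:ℝ≥0∞)^(2*θ*(((q+1-1-j:ℕ):ℝ) - q)) = (2:ℝ≥0∞)^((-2*θ)*(j:ℕ)) := by
        intro j hj
        have hj' : j ≤ q := Nat.lt_succ_iff.1 (Finset.mem_range.1 hj)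
        have h1 : q+1-1-j = q-j := by omega
        congr 1
        rw [h1, Nat.cast_sub hj']
        ring
      rw [Finset.sum_congr rfl hcong]
      exact ENNReal.summable.sum_le_tsum _ (fun _ _ => zero_le)
    calc ∑' (q : ℕ) (p : ℕ), (if p ≤ q then (1:ℝ≥0∞) else 0)
          * (2:ℝ≥0∞) ^ (θ * p - κ * q) * (α p * (β q * γ q))
        ≤ ∑' q : ℕ, (β q * γ q) * (C0 * l2 α) := ENNReal.tsum_le_tsum step1
      _ = (∑' q : ℕ, β q * γ q) * (C0 * l2 α) := ENNReal.tsum_mul_right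
      _ ≤ (l2 β * l2 γ) * (C0 * l2 α) := mul_le_mul' (ecs' β γ) le_rfl
      _ = _ := by ring



lemma reg {s t u : ℝ} (htu : 0 ≤ t + u) (hsum : 3/2 ≤ s + t + u) (hs : s = 3/2 → 0 < t + u) :
    ∃ C : ℝ≥0∞, C ≠ ⊤ ∧ ∀ a b c : ℕ → ℝ≥0∞,
      ∑' (v : ℕ × ℕ × ℕ), (if v.1 ≤ v.2.1 ∧ v.2.1 ≤ v.2.2 ∧ v.2.2 ≤ v.2.1 + 2 then (1:ℝ≥0∞) else 0)
          * (2:ℝ≥0∞) ^ ((3/2 - s) * v.1 - t * v.2.1 - u * v.2.2) * (a v.1 * (b v.2.1 * c v.2.2))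
        ≤ C * (l2 a * (l2 b * l2 c)) := by
  obtain ⟨CD, hCD, hD⟩ := lemD (θ := 3/2 - s) (κ := t + u) htu (by linarith)
    (fun h => hs (by linarith))
  refine ⟨3 * ((2:ℝ≥0∞)^(2*|u|) * CD), ?_, fun a b c => ?_⟩
  · exact ENNReal.mul_ne_top (by norm_num) (ENNReal.mul_ne_top two_rpow_ne_top hCD)
  have hfix : ∀ j ∈ Finset.range 3,
      (∑' (v : ℕ × ℕ × ℕ), (if v.1 ≤ v.2.1 ∧ v.2.2 = v.2.1 + j then (1:ℝ≥0∞) else 0)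
        * (2:ℝ≥0∞) ^ ((3/2 - s) * v.1 - t * v.2.1 - u * v.2.2) * (a v.1 * (b v.2.1 * c v.2.2)))
      ≤ ((2:ℝ≥0∞)^(2*|u|) * CD) * (l2 a * (l2 b * l2 c)) := by
    intro j hj
    have hj2 : (j:ℝ) ≤ 2 := by
      have := Finset.mem_range.1 hj; exact_mod_cast Nat.lt_succ_iff.1 this
    rw [ENNReal.tsum_prod']
    have hrow : ∀ p : ℕ, (∑' (w : ℕ × ℕ), (if p ≤ w.1 ∧ w.2 = w.1 + j then (1:ℝ≥0∞) else 0)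
          * (2:ℝ≥0∞) ^ ((3/2 - s) * p - t * w.1 - u * w.2) * (a p * (b w.1 * c w.2)))
        = ∑' q : ℕ, (if p ≤ q then (1:ℝ≥0∞) else 0)
          * (2:ℝ≥0∞) ^ ((3/2 - s) * p - t * q - u * (q + j:ℕ)) * (a p * (b q * c (q + j))) := by
      intro p
      rw [ENNReal.tsum_prod']
      refine tsum_congr fun q => ?_
      rw [tsum_eq_single (q + j) (by
        intro r hr
        rw [if_neg (by exact fun hand => hr hand.2), zero_mul, zero_mul])]
      by_cases hpq : p ≤ q
      · rw [if_pos ⟨hpq, rfl⟩, if_pos hpq]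
      · rw [if_neg (fun hand => hpq hand.1), if_neg hpq]
    rw [tsum_congr hrow]
    have hpt : ∀ (p q : ℕ), (if p ≤ q then (1:ℝ≥0∞) else 0)
          * (2:ℝ≥0∞) ^ ((3/2 - s) * p - t * q - u * (q + j:ℕ)) * (a p * (b q * c (q + j)))
        ≤ (2:ℝ≥0∞)^(2*|u|) * ((if p ≤ q then (1:ℝ≥0∞) else 0)
          * (2:ℝ≥0∞) ^ ((3/2 - s) * p - (t+u) * q) * (a p * (b q * c (q + j)))) := by
      intro p q
      have hexp : (2:ℝ≥0∞) ^ ((3/2 - s) * p - t * q - u * ((q:ℕ) + j:ℕ))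
          ≤ (2:ℝ≥0∞)^(2*|u|) * (2:ℝ≥0∞) ^ ((3/2 - s) * p - (t+u) * q) := by
        rw [← ENNReal.rpow_add _ _ (by norm_num) (by norm_num)]
        refine ENNReal.rpow_le_rpow_of_exponent_le (by norm_num) ?_
        push_cast
        have h1 : -u * j ≤ 2*|u| := by
          rcases le_or_gt 0 u with h | h
          · nlinarith [abs_of_nonneg h, Nat.cast_nonneg (α := ℝ) j]
          · nlinarith [abs_of_neg h]
        nlinarith []
      calc (if p ≤ q then (1:ℝ≥0∞) else 0)
            * (2:ℝ≥0∞) ^ ((3/2 - s) * p - t * q - u * (q + j:ℕ)) * (a p * (b q * c (q + j)))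
          ≤ (if p ≤ q then (1:ℝ≥0∞) else 0)
            * ((2:ℝ≥0∞)^(2*|u|) * (2:ℝ≥0∞) ^ ((3/2 - s) * p - (t+u) * q)) * (a p * (b q * c (q + j))) :=
            mul_le_mul' (mul_le_mul' le_rfl hexp) le_rfl
        _ = _ := by ring
    calc (∑' (p : ℕ) (q : ℕ), (if p ≤ q then (1:ℝ≥0∞) else 0)
            * (2:ℝ≥0∞) ^ ((3/2 - s) * p - t * q - u * (q + j:ℕ)) * (a p * (b q * c (q + j))))
        ≤ (∑' (p : ℕ) (q : ℕ), (2:ℝ≥0∞)^(2*|u|) * ((if p ≤ q then (1:ℝ≥0∞) else 0)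
            * (2:ℝ≥0∞) ^ ((3/2 - s) * p - (t+u) * q) * (a p * (b q * c (q + j))))) :=
          ENNReal.tsum_le_tsum (fun p => ENNReal.tsum_le_tsum (fun q => hpt p q))
      _ = (2:ℝ≥0∞)^(2*|u|) * (∑' (p : ℕ) (q : ℕ), ((if p ≤ q then (1:ℝ≥0∞) else 0)
            * (2:ℝ≥0∞) ^ ((3/2 - s) * p - (t+u) * q) * (a p * (b q * c (q + j))))) := by
          rw [← ENNReal.tsum_mul_left]
          exact tsum_congr fun p => ENNReal.tsum_mul_left
      _ ≤ (2:ℝ≥0∞)^(2*|u|) * (CD * (l2 a * (l2 b * l2 (fun q => c (q + j))))) :=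
          mul_le_mul' le_rfl (hD a b (fun q => c (q + j)))
      _ ≤ ((2:ℝ≥0∞)^(2*|u|) * CD) * (l2 a * (l2 b * l2 c)) := by
          rw [mul_assoc]
          exact mul_le_mul' le_rfl (mul_le_mul' le_rfl
            (mul_le_mul' le_rfl (mul_le_mul' le_rfl (l2_shift j))))
  -- cover by the three j-indicators
  have hcover : ∀ (v : ℕ × ℕ × ℕ),
      (if v.1 ≤ v.2.1 ∧ v.2.1 ≤ v.2.2 ∧ v.2.2 ≤ v.2.1 + 2 then (1:ℝ≥0∞) else 0)
        * (2:ℝ≥0∞) ^ ((3/2 - s) * v.1 - t * v.2.1 - u * v.2.2) * (a v.1 * (b v.2.1 * c v.2.2))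
      ≤ ∑ j ∈ Finset.range 3, (if v.1 ≤ v.2.1 ∧ v.2.2 = v.2.1 + j then (1:ℝ≥0∞) else 0)
        * (2:ℝ≥0∞) ^ ((3/2 - s) * v.1 - t * v.2.1 - u * v.2.2) * (a v.1 * (b v.2.1 * c v.2.2)) := by
    intro v
    by_cases h : v.1 ≤ v.2.1 ∧ v.2.1 ≤ v.2.2 ∧ v.2.2 ≤ v.2.1 + 2
    · obtain ⟨h1, h2, h3⟩ := h
      have hjex : v.2.2 - v.2.1 ∈ Finset.range 3 := Finset.mem_range.2 (by omega)
      have hsel : (if v.1 ≤ v.2.1 ∧ v.2.2 = v.2.1 + (v.2.2 - v.2.1) then (1:ℝ≥0∞) else 0) = 1 :=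
        if_pos ⟨h1, by omega⟩
      calc _ = (1:ℝ≥0∞) * (2:ℝ≥0∞) ^ ((3/2 - s) * v.1 - t * v.2.1 - u * v.2.2)
            * (a v.1 * (b v.2.1 * c v.2.2)) := by rw [if_pos ⟨h1, h2, h3⟩]
        _ = (if v.1 ≤ v.2.1 ∧ v.2.2 = v.2.1 + (v.2.2 - v.2.1) then (1:ℝ≥0∞) else 0)
            * (2:ℝ≥0∞) ^ ((3/2 - s) * v.1 - t * v.2.1 - u * v.2.2)
            * (a v.1 * (b v.2.1 * c v.2.2)) := by rw [hsel]
        _ ≤ _ := Finset.single_le_sum (f := fun j => (if v.1 ≤ v.2.1 ∧ v.2.2 = v.2.1 + j then (1:ℝ≥0∞) else 0)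
            * (2:ℝ≥0∞) ^ ((3/2 - s) * v.1 - t * v.2.1 - u * v.2.2)
            * (a v.1 * (b v.2.1 * c v.2.2))) (fun _ _ => zero_le) hjex
    · rw [if_neg h, zero_mul, zero_mul]
      exact zero_le
  calc (∑' (v : ℕ × ℕ × ℕ), (if v.1 ≤ v.2.1 ∧ v.2.1 ≤ v.2.2 ∧ v.2.2 ≤ v.2.1 + 2 then (1:ℝ≥0∞) else 0)
        * (2:ℝ≥0∞) ^ ((3/2 - s) * v.1 - t * v.2.1 - u * v.2.2) * (a v.1 * (b v.2.1 * c v.2.2)))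
      ≤ ∑' (v : ℕ × ℕ × ℕ), ∑ j ∈ Finset.range 3,
        (if v.1 ≤ v.2.1 ∧ v.2.2 = v.2.1 + j then (1:ℝ≥0∞) else 0)
        * (2:ℝ≥0∞) ^ ((3/2 - s) * v.1 - t * v.2.1 - u * v.2.2) * (a v.1 * (b v.2.1 * c v.2.2)) :=
        ENNReal.tsum_le_tsum hcover
    _ = ∑ j ∈ Finset.range 3, ∑' (v : ℕ × ℕ × ℕ),
        (if v.1 ≤ v.2.1 ∧ v.2.2 = v.2.1 + j then (1:ℝ≥0∞) else 0)
        * (2:ℝ≥0∞) ^ ((3/2 - s) * v.1 - t * v.2.1 - u * v.2.2) * (a v.1 * (b v.2.1 * c v.2.2)) :=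
        Summable.tsum_finsetSum (fun i _ => ENNReal.summable)
    _ ≤ ∑ j ∈ Finset.range 3, ((2:ℝ≥0∞)^(2*|u|) * CD) * (l2 a * (l2 b * l2 c)) :=
        Finset.sum_le_sum hfix
    _ = _ := by
        rw [Finset.sum_const, Finset.card_range]
        rw [show ((3:ℕ) • (((2:ℝ≥0∞)^(2*|u|) * CD) * (l2 a * (l2 b * l2 c))))
          = (3:ℝ≥0∞) * (((2:ℝ≥0∞)^(2*|u|) * CD) * (l2 a * (l2 b * l2 c))) by
            rw [nsmul_eq_mul]; norm_num]
        ring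



/-- shell indicator -/
def chsh (p : ℕ) (k : K3) : ℝ≥0∞ := if dsh k = p ∧ k ≠ 0 then 1 else 0

lemma chsh_sq (p : ℕ) (k : K3) : chsh p k ^ (2:ℝ) = chsh p k := by
  rw [chsh]; exact indic_sq

lemma chsh_idem (p : ℕ) (k : K3) : chsh p k * chsh p k = chsh p k := by
  rw [chsh]; split <;> simp

/-- squared l2 mass of a shell -/
def shsq (A : K3 → ℝ≥0∞) (p : ℕ) : ℝ≥0∞ := ∑' k, chsh p k * A k ^ (2:ℝ)

lemma sum_shsq (A : K3 → ℝ≥0∞) (hA : A 0 = 0) : (∑' p, shsq A p) = ∑' k, A k ^ (2:ℝ) := by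
  rw [show (∑' p, shsq A p) = ∑' (p : ℕ) (k : K3), chsh p k * A k ^ (2:ℝ) from rfl,
    ENNReal.tsum_comm]
  refine tsum_congr fun k => ?_
  by_cases hk : k = 0
  · subst hk
    rw [hA]
    simp [chsh, ENNReal.zero_rpow_of_pos]
  · rw [tsum_eq_single (dsh k) (by
      intro p hp
      rw [chsh, if_neg (by exact fun h => hp h.1.symm), zero_mul])]
    rw [chsh, if_pos ⟨rfl, hk⟩, one_mul]

lemma l2_shell (A : K3 → ℝ≥0∞) (hA : A 0 = 0) :
    l2 (fun p => (shsq A p) ^ ((1:ℝ)/2)) = l2 A := by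
  rw [l2, l2]
  congr 1
  rw [← sum_shsq A hA]
  refine tsum_congr fun p => ?_
  rw [← ENNReal.rpow_mul]
  norm_num

lemma chsh_count (p : ℕ) : (∑' k : K3, chsh p k) ≤ (2:ℝ≥0∞)^(3*(p:ℝ)+9) := by
  classical
  set B : ℤ := ((2^(p+1) : ℕ) : ℤ) with hB
  set F : Finset K3 := Fintype.piFinset (fun _ : Fin 3 => Finset.Icc (-B) B) with hF
  have hsub : ∀ k : K3, k ∉ F → chsh p k = 0 := by
    intro k hk
    rw [chsh, if_neg]
    rintro ⟨hd, hk0⟩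
    apply hk
    rw [hF, Fintype.mem_piFinset]
    intro i
    rw [Finset.mem_Icc]
    have h1 : (k i).natAbs ^ 2 ≤ nsq k :=
      Finset.single_le_sum (f := fun i => (k i).natAbs ^ 2) (fun _ _ => Nat.zero_le _)
        (Finset.mem_univ i)
    have h2 : nsq k < 4 ^ (p + 1) := by
      rw [← hd]
      exact Nat.lt_pow_succ_log_self (by norm_num) _
    have hpow : ((2:ℕ)^(p+1))^2 = 4 ^ (p+1) := by
      rw [← pow_mul, mul_comm, pow_mul]
      norm_num
    have h3 : (k i).natAbs ^ 2 < (2 ^ (p+1)) ^ 2 := by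
      rw [hpow]
      exact lt_of_le_of_lt h1 h2
    have h4 : (k i).natAbs ≤ 2 ^ (p+1) :=
      le_of_lt (lt_of_pow_lt_pow_left₀ 2 (Nat.zero_le _) h3)
    have h5 : |k i| ≤ B := by
      rw [hB, Int.abs_eq_natAbs]
      exact_mod_cast h4
    exact abs_le.1 h5
  have hle : (∑' k : K3, chsh p k) ≤ (F.card : ℝ≥0∞) := by
    rw [tsum_eq_sum hsub]
    calc ∑ k ∈ F, chsh p k ≤ ∑ k ∈ F, 1 := Finset.sum_le_sum (fun k _ => by
        rw [chsh]; split <;> simp)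
      _ = (F.card : ℝ≥0∞) := by rw [Finset.sum_const, nsmul_eq_mul, mul_one]
  refine hle.trans ?_
  have hcard : F.card = (Finset.Icc (-B) B).card ^ 3 := by
    rw [hF, Fintype.card_piFinset]
    simp
  have hicc : (Finset.Icc (-B) B).card = 2 ^ (p+2) + 1 := by
    rw [Int.card_Icc]
    have : B + 1 - (-B) = ((2^(p+2) + 1 : ℕ) : ℤ) := by
      rw [hB]; push_cast; ring
    rw [this, Int.toNat_natCast]
  have hnat : F.card ≤ 2 ^ (3*p+9) := by
    rw [hcard, hicc]
    have h1 : 2 ^ (p+2) + 1 ≤ 2 ^ (p+3) := by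
      have h0 : 1 ≤ (2:ℕ)^(p+2) := Nat.one_le_two_pow
      have h2eq : (2:ℕ)^(p+3) = 2^(p+2) + 2^(p+2) := by
        rw [show p+3 = (p+2)+1 from rfl, pow_succ]
        ring
      omega
    calc (2 ^ (p+2) + 1) ^ 3 ≤ (2 ^ (p+3)) ^ 3 := Nat.pow_le_pow_left h1 3
      _ = 2 ^ (3*p+9) := by rw [← pow_mul]; ring_nf
  calc (F.card : ℝ≥0∞) ≤ ((2 ^ (3*p+9) : ℕ) : ℝ≥0∞) := by exact_mod_cast hnat
    _ = (2:ℝ≥0∞) ^ ((3*p+9 : ℕ) : ℝ) := by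
        rw [ENNReal.rpow_natCast]
        push_cast
        ring_nf
    _ = (2:ℝ≥0∞) ^ (3*(p:ℝ)+9) := by
        congr 1
        push_cast
        ring

/-- main shell Cauchy-Schwarz bound, smallest shell in first slot -/
lemma SB (A B G : K3 → ℝ≥0∞) (p q r : ℕ) :
    (∑' km : K3 × K3, (chsh p km.1 * A km.1) * ((chsh q km.2 * B km.2)
        * (chsh r (-(km.1+km.2)) * G (-(km.1+km.2)))))
    ≤ (2:ℝ≥0∞)^(5:ℝ) * (2:ℝ≥0∞)^(3*(p:ℝ)/2)
      * ((shsq A p)^((1:ℝ)/2) * ((shsq B q)^((1:ℝ)/2) * (shsq G r)^((1:ℝ)/2))) := by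
  rw [ENNReal.tsum_prod']
  have hinner : ∀ k : K3, (∑' m : K3, (chsh q m * B m)
        * (chsh r (-(k+m)) * G (-(k+m))))
      ≤ (shsq B q)^((1:ℝ)/2) * (shsq G r)^((1:ℝ)/2) := by
    intro k
    refine (ecs (fun m => chsh q m * B m) (fun m => chsh r (-(k+m)) * G (-(k+m)))).trans ?_
    have h1 : (∑' m : K3, (chsh q m * B m) ^ (2:ℝ)) = shsq B q := by
      refine tsum_congr fun m => ?_
      rw [ENNReal.mul_rpow_of_nonneg _ _ (by norm_num : (0:ℝ) ≤ 2), chsh_sq]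
    have e : Function.Involutive (fun m : K3 => -(k+m)) := by
      intro m; simp
    have h2 : (∑' m : K3, (chsh r (-(k+m)) * G (-(k+m))) ^ (2:ℝ)) = shsq G r := by
      have ht := Equiv.tsum_eq (Function.Involutive.toPerm _ e) (fun n => (chsh r n * G n) ^ (2:ℝ))
      calc (∑' m : K3, (chsh r (-(k+m)) * G (-(k+m))) ^ (2:ℝ))
          = ∑' m : K3, (fun n => (chsh r n * G n) ^ (2:ℝ)) ((Function.Involutive.toPerm _ e) m) := rfl
        _ = ∑' n : K3, (fun n => (chsh r n * G n) ^ (2:ℝ)) n := ht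
        _ = shsq G r := by
            refine tsum_congr fun n => ?_
            rw [ENNReal.mul_rpow_of_nonneg _ _ (by norm_num : (0:ℝ) ≤ 2), chsh_sq]
    rw [h1, h2]
  calc (∑' (k : K3) (m : K3), (chsh p k * A k) * ((chsh q m * B m)
          * (chsh r (-(k+m)) * G (-(k+m)))))
      ≤ ∑' k : K3, (chsh p k * A k) * ((shsq B q)^((1:ℝ)/2) * (shsq G r)^((1:ℝ)/2)) := by
        refine ENNReal.tsum_le_tsum fun k => ?_
        rw [ENNReal.tsum_mul_left]
        exact mul_le_mul' le_rfl (hinner k)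
    _ = (∑' k : K3, chsh p k * A k) * ((shsq B q)^((1:ℝ)/2) * (shsq G r)^((1:ℝ)/2)) :=
        ENNReal.tsum_mul_right
    _ ≤ ((2:ℝ≥0∞)^(3*(p:ℝ)+9))^((1:ℝ)/2) * (shsq A p)^((1:ℝ)/2)
          * ((shsq B q)^((1:ℝ)/2) * (shsq G r)^((1:ℝ)/2)) := by
        refine mul_le_mul' ?_ le_rfl
        have hstep : (∑' k : K3, chsh p k * A k)
            = ∑' k : K3, chsh p k * (chsh p k * A k) := by
          refine tsum_congr fun k => ?_
          rw [← mul_assoc, chsh_idem]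
        rw [hstep]
        refine (ecs (fun k => chsh p k) (fun k => chsh p k * A k)).trans ?_
        refine mul_le_mul' ?_ ?_
        · refine ENNReal.rpow_le_rpow ?_ (by norm_num)
          rw [tsum_congr (fun k => chsh_sq p k)]
          exact chsh_count p
        · refine le_of_eq ?_
          congr 1
          refine tsum_congr fun k => ?_
          rw [ENNReal.mul_rpow_of_nonneg _ _ (by norm_num : (0:ℝ) ≤ 2), chsh_sq]
    _ ≤ _ := by
        have hh : ((2:ℝ≥0∞)^(3*(p:ℝ)+9))^((1:ℝ)/2)
            ≤ (2:ℝ≥0∞)^(5:ℝ) * (2:ℝ≥0∞)^(3*(p:ℝ)/2) := by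
          rw [← ENNReal.rpow_mul, ← ENNReal.rpow_add _ _ (by norm_num) (by norm_num)]
          refine ENNReal.rpow_le_rpow_of_exponent_le (by norm_num) ?_
          nlinarith [Nat.cast_nonneg (α := ℝ) p]
        calc ((2:ℝ≥0∞)^(3*(p:ℝ)+9))^((1:ℝ)/2) * (shsq A p)^((1:ℝ)/2)
              * ((shsq B q)^((1:ℝ)/2) * (shsq G r)^((1:ℝ)/2))
            ≤ ((2:ℝ≥0∞)^(5:ℝ) * (2:ℝ≥0∞)^(3*(p:ℝ)/2)) * (shsq A p)^((1:ℝ)/2)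
              * ((shsq B q)^((1:ℝ)/2) * (shsq G r)^((1:ℝ)/2)) :=
              mul_le_mul' (mul_le_mul' hh le_rfl) le_rfl
          _ = _ := by ring



def AdmP (p q r : ℕ) : Prop :=
  (p ≤ q+2 ∨ p ≤ r+2) ∧ (q ≤ p+2 ∨ q ≤ r+2) ∧ (r ≤ p+2 ∨ r ≤ q+2)

instance (p q r : ℕ) : Decidable (AdmP p q r) := by unfold AdmP; infer_instance

lemma adm1 {a b c : ℕ} (h : (2:ℝ)^a ≤ 2^(b+1) + 2^(c+1)) : a ≤ b+2 ∨ a ≤ c+2 := by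
  have key : ∀ x y : ℕ, (2:ℝ)^x ≤ 2^(y+2) → x ≤ y + 2 := by
    intro x y hxy
    exact (pow_le_pow_iff_right₀ (by norm_num : (1:ℝ) < 2)).1 hxy
  rcases le_total ((2:ℝ)^(b+1)) ((2:ℝ)^(c+1)) with hbc | hbc
  · right
    refine key a c ?_
    have he : (2:ℝ)^(c+2) = 2^(c+1) + 2^(c+1) := by rw [pow_succ]; ring
    linarith
  · left
    refine key a b ?_
    have he : (2:ℝ)^(b+2) = 2^(b+1) + 2^(b+1) := by rw [pow_succ]; ring
    linarith

lemma shell_pair {x y z : K3} (hx : x ≠ 0)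
    (hxyz : Nk x ≤ Nk y + Nk z) : dsh x ≤ dsh y + 2 ∨ dsh x ≤ dsh z + 2 := by
  refine adm1 (a := dsh x) (b := dsh y) (c := dsh z) ?_
  calc (2:ℝ)^(dsh x) ≤ Nk x := shell_le hx
    _ ≤ Nk y + Nk z := hxyz
    _ ≤ 2^(dsh y + 1) + 2^(dsh z + 1) := by
        have h1 := shell_lt y
        have h2 := shell_lt z
        linarith

lemma adm_geom {k m : K3} (hk : k ≠ 0) (hm : m ≠ 0) (hn : k + m ≠ 0) :
    AdmP (dsh k) (dsh m) (dsh (-(k+m))) := by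
  have hn' : (-(k+m) : K3) ≠ 0 := by
    rw [Ne, neg_eq_zero]
    exact hn
  have hNk : Nk k ≤ Nk m + Nk (-(k+m)) := by
    have e1 : m + -(k+m) = -k := by abel
    calc Nk k = Nk (-k) := (Nk_neg k).symm
      _ = Nk (m + -(k+m)) := by rw [e1]
      _ ≤ _ := Nk_triangle _ _
  have hNm : Nk m ≤ Nk k + Nk (-(k+m)) := by
    have e1 : k + -(k+m) = -m := by abel
    calc Nk m = Nk (-m) := (Nk_neg m).symm
      _ = Nk (k + -(k+m)) := by rw [e1]
      _ ≤ _ := Nk_triangle _ _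
  have hNn : Nk (-(k+m)) ≤ Nk k + Nk m := by
    calc Nk (-(k+m)) = Nk (k+m) := Nk_neg _
      _ ≤ _ := Nk_triangle _ _
  exact ⟨shell_pair hk hNk, shell_pair hm hNm, shell_pair hn' hNn⟩

lemma chsh_eq_zero {p : ℕ} {k : K3} (h : ¬(dsh k = p ∧ k ≠ 0)) : chsh p k = 0 := if_neg h

lemma Spqr_le (A B G : K3 → ℝ≥0∞) (p q r : ℕ) :
    (∑' km : K3 × K3, (chsh p km.1 * A km.1) * ((chsh q km.2 * B km.2)
        * (chsh r (-(km.1+km.2)) * G (-(km.1+km.2)))))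
    ≤ (if AdmP p q r then (1:ℝ≥0∞) else 0) * ((2:ℝ≥0∞)^(5:ℝ)
        * (2:ℝ≥0∞)^(3*((min p (min q r) : ℕ):ℝ)/2)
        * ((shsq A p)^((1:ℝ)/2) * ((shsq B q)^((1:ℝ)/2) * (shsq G r)^((1:ℝ)/2)))) := by
  by_cases hadm : AdmP p q r
  · rw [if_pos hadm, one_mul]
    rcases le_total p (min q r) with hmin | hmin
    · rw [min_eq_left hmin]
      exact SB A B G p q r
    · rw [min_eq_right hmin]
      rcases le_total q r with hqr | hqr
      · rw [min_eq_left hqr]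
        -- min = q : swap the first two slots
        have hre : (∑' km : K3 × K3, (chsh p km.1 * A km.1) * ((chsh q km.2 * B km.2)
              * (chsh r (-(km.1+km.2)) * G (-(km.1+km.2)))))
            = ∑' km : K3 × K3, (chsh q km.1 * B km.1) * ((chsh p km.2 * A km.2)
              * (chsh r (-(km.1+km.2)) * G (-(km.1+km.2)))) := by
          rw [← Equiv.tsum_eq (Equiv.prodComm K3 K3) (fun km : K3 × K3 =>
            (chsh q km.1 * B km.1) * ((chsh p km.2 * A km.2)
              * (chsh r (-(km.1+km.2)) * G (-(km.1+km.2)))))]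
          refine tsum_congr fun w => ?_
          show (chsh p w.1 * A w.1) * ((chsh q w.2 * B w.2)
              * (chsh r (-(w.1+w.2)) * G (-(w.1+w.2))))
            = (chsh q w.2 * B w.2) * ((chsh p w.1 * A w.1)
              * (chsh r (-(w.2+w.1)) * G (-(w.2+w.1))))
          rw [show w.2 + w.1 = w.1 + w.2 from add_comm _ _]
          ring
        rw [hre]
        refine (SB B A G q p r).trans (le_of_eq ?_)
        ring
      · rw [min_eq_right hqr]
        -- min = r : move the third slot to the front
        have einv : Function.Involutive (fun w : K3 × K3 => ((-(w.1+w.2) : K3), w.2)) := by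
          intro w
          refine Prod.ext ?_ rfl
          show -(-(w.1+w.2) + w.2) = w.1
          abel
        have hre : (∑' km : K3 × K3, (chsh p km.1 * A km.1) * ((chsh q km.2 * B km.2)
              * (chsh r (-(km.1+km.2)) * G (-(km.1+km.2)))))
            = ∑' km : K3 × K3, (chsh r km.1 * G km.1) * ((chsh q km.2 * B km.2)
              * (chsh p (-(km.1+km.2)) * A (-(km.1+km.2)))) := by
          rw [← Equiv.tsum_eq (Function.Involutive.toPerm _ einv) (fun km : K3 × K3 =>
            (chsh r km.1 * G km.1) * ((chsh q km.2 * B km.2)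
              * (chsh p (-(km.1+km.2)) * A (-(km.1+km.2)))))]
          refine tsum_congr fun w => ?_
          show (chsh p w.1 * A w.1) * ((chsh q w.2 * B w.2)
              * (chsh r (-(w.1+w.2)) * G (-(w.1+w.2))))
            = (chsh r (-(w.1+w.2)) * G (-(w.1+w.2))) * ((chsh q w.2 * B w.2)
              * (chsh p (-(-(w.1+w.2)+w.2)) * A (-(-(w.1+w.2)+w.2))))
          rw [show -(-(w.1+w.2)+w.2) = w.1 by abel]
          ring
        rw [hre]
        refine (SB G B A r q p).trans (le_of_eq ?_)
        ring
  · rw [if_neg hadm, zero_mul]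
    refine le_of_eq ?_
    have hzero : ∀ km : K3 × K3, (chsh p km.1 * A km.1) * ((chsh q km.2 * B km.2)
        * (chsh r (-(km.1+km.2)) * G (-(km.1+km.2)))) = 0 := by
      intro km
      by_cases h1 : dsh km.1 = p ∧ km.1 ≠ 0
      · by_cases h2 : dsh km.2 = q ∧ km.2 ≠ 0
        · by_cases h3 : dsh (-(km.1+km.2)) = r ∧ (-(km.1+km.2) : K3) ≠ 0
          · exfalso
            apply hadm
            have hn : km.1 + km.2 ≠ 0 := fun h => h3.2 (by rw [h, neg_zero])
            have := adm_geom h1.2 h2.2 hn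
            rwa [h1.1, h2.1, h3.1] at this
          · rw [chsh_eq_zero h3]
            ring
        · rw [chsh_eq_zero h2]
          ring
      · rw [chsh_eq_zero h1]
        ring
    rw [tsum_congr hzero]
    exact tsum_zero



def eN (k : K3) : ℝ≥0∞ := ENNReal.ofReal (Nk k)

lemma eN_ne_top {k : K3} : eN k ≠ ⊤ := ENNReal.ofReal_ne_top

lemma one_le_eN {k : K3} (hk : k ≠ 0) : 1 ≤ eN k := by
  rw [eN, ENNReal.one_le_ofReal]
  exact one_le_Nk hk

lemma eN_ne_zero {k : K3} (hk : k ≠ 0) : eN k ≠ 0 := by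
  intro h
  have h1 := one_le_eN hk
  rw [h] at h1
  simp at h1

lemma two_rpow_ofReal {x : ℝ} : (2:ℝ≥0∞) ^ x = ENNReal.ofReal ((2:ℝ) ^ x) := by
  rw [← ENNReal.ofReal_rpow_of_pos (by norm_num : (0:ℝ) < 2)]
  norm_num

lemma eN_shell_le {k : K3} (hk : k ≠ 0) : (2:ℝ≥0∞)^((dsh k : ℕ):ℝ) ≤ eN k := by
  rw [two_rpow_ofReal, eN]
  refine ENNReal.ofReal_le_ofReal ?_
  rw [Real.rpow_natCast]
  exact shell_le hk

lemma eN_shell_lt {k : K3} : eN k ≤ (2:ℝ≥0∞)^(((dsh k : ℕ):ℝ)+1) := by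
  rw [two_rpow_ofReal, eN]
  refine ENNReal.ofReal_le_ofReal ?_
  rw [show ((dsh k : ℕ):ℝ)+1 = (((dsh k + 1 : ℕ)):ℝ) by push_cast; ring, Real.rpow_natCast]
  exact le_of_lt (shell_lt k)

lemma wt {x : ℝ≥0∞} {d : ℕ} (s : ℝ) (hx0 : x ≠ 0)
    (h1 : (2:ℝ≥0∞)^((d:ℕ):ℝ) ≤ x) (h2 : x ≤ (2:ℝ≥0∞)^(((d:ℕ):ℝ)+1)) :
    x ^ (-s) ≤ (2:ℝ≥0∞)^|s| * (2:ℝ≥0∞)^(-(s*(d:ℝ))) := by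
  rcases le_or_gt 0 s with hs | hs
  · have ha : ((2:ℝ≥0∞)^((d:ℕ):ℝ))^s ≤ x ^ s := ENNReal.rpow_le_rpow h1 hs
    have hmain : x^(-s) ≤ ((2:ℝ≥0∞)^((d:ℕ):ℝ))^(-s) := by
      rw [ENNReal.rpow_neg, ENNReal.rpow_neg]
      exact ENNReal.inv_le_inv.2 ha
    refine hmain.trans ?_
    rw [← ENNReal.rpow_mul]
    calc (2:ℝ≥0∞)^((d:ℝ)*(-s)) = (2:ℝ≥0∞)^(-(s*(d:ℝ))) := by ring_nf
      _ = 1 * (2:ℝ≥0∞)^(-(s*(d:ℝ))) := (one_mul _).symm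
      _ ≤ _ := by
          refine mul_le_mul' ?_ le_rfl
          calc (1:ℝ≥0∞) = (2:ℝ≥0∞)^(0:ℝ) := by rw [ENNReal.rpow_zero]
            _ ≤ _ := ENNReal.rpow_le_rpow_of_exponent_le (by norm_num) (abs_nonneg s)
  · have := ENNReal.rpow_le_rpow h2 (le_of_lt (neg_pos.2 hs))
    refine this.trans (le_of_eq ?_)
    rw [← ENNReal.rpow_mul, ← ENNReal.rpow_add _ _ (by norm_num) (by norm_num)]
    congr 1
    rw [abs_of_neg hs]
    ring

lemma hmul2 (x y : ℝ) : (2:ℝ≥0∞)^x * (2:ℝ≥0∞)^y = (2:ℝ≥0∞)^(x+y) :=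
  (ENNReal.rpow_add x y (by norm_num) (by norm_num)).symm

lemma core {s1 s2 s3 : ℝ}
    (hcond : (0 ≤ s1 + s2 ∧ 0 ≤ s1 + s3 ∧ 0 ≤ s2 + s3 ∧ 3 / 2 < s1 + s2 + s3) ∨
      (0 < s1 + s2 ∧ 0 < s1 + s3 ∧ 0 < s2 + s3 ∧ 3 / 2 ≤ s1 + s2 + s3)) :
    ∃ C : ℝ≥0∞, C ≠ ⊤ ∧ ∀ U V W : K3 → ℝ≥0∞, U 0 = 0 → V 0 = 0 → W 0 = 0 →
      (∑' km : K3 × K3, U km.1 * ((eN km.2 * V km.2) * W (-(km.1+km.2))))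
      ≤ C * (l2 (fun k => eN k ^ s1 * U k) * (l2 (fun k => eN k ^ (s2+1) * V k)
          * l2 (fun k => eN k ^ s3 * W k))) := by
  obtain ⟨C1, hC1, hR1⟩ := reg (s:=s1) (t:=s2) (u:=s3)
    (by rcases hcond with ⟨a,b,c,d⟩|⟨a,b,c,d⟩ <;> linarith)
    (by rcases hcond with ⟨a,b,c,d⟩|⟨a,b,c,d⟩ <;> linarith)
    (fun h => by rcases hcond with ⟨a,b,c,d⟩|⟨a,b,c,d⟩ <;> linarith)
  obtain ⟨C2, hC2, hR2⟩ := reg (s:=s1) (t:=s3) (u:=s2)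
    (by rcases hcond with ⟨a,b,c,d⟩|⟨a,b,c,d⟩ <;> linarith)
    (by rcases hcond with ⟨a,b,c,d⟩|⟨a,b,c,d⟩ <;> linarith)
    (fun h => by rcases hcond with ⟨a,b,c,d⟩|⟨a,b,c,d⟩ <;> linarith)
  obtain ⟨C3, hC3, hR3⟩ := reg (s:=s2) (t:=s1) (u:=s3)
    (by rcases hcond with ⟨a,b,c,d⟩|⟨a,b,c,d⟩ <;> linarith)
    (by rcases hcond with ⟨a,b,c,d⟩|⟨a,b,c,d⟩ <;> linarith)
    (fun h => by rcases hcond with ⟨a,b,c,d⟩|⟨a,b,c,d⟩ <;> linarith)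
  obtain ⟨C4, hC4, hR4⟩ := reg (s:=s2) (t:=s3) (u:=s1)
    (by rcases hcond with ⟨a,b,c,d⟩|⟨a,b,c,d⟩ <;> linarith)
    (by rcases hcond with ⟨a,b,c,d⟩|⟨a,b,c,d⟩ <;> linarith)
    (fun h => by rcases hcond with ⟨a,b,c,d⟩|⟨a,b,c,d⟩ <;> linarith)
  obtain ⟨C5, hC5, hR5⟩ := reg (s:=s3) (t:=s1) (u:=s2)
    (by rcases hcond with ⟨a,b,c,d⟩|⟨a,b,c,d⟩ <;> linarith)
    (by rcases hcond with ⟨a,b,c,d⟩|⟨a,b,c,d⟩ <;> linarith)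
    (fun h => by rcases hcond with ⟨a,b,c,d⟩|⟨a,b,c,d⟩ <;> linarith)
  obtain ⟨C6, hC6, hR6⟩ := reg (s:=s3) (t:=s2) (u:=s1)
    (by rcases hcond with ⟨a,b,c,d⟩|⟨a,b,c,d⟩ <;> linarith)
    (by rcases hcond with ⟨a,b,c,d⟩|⟨a,b,c,d⟩ <;> linarith)
    (fun h => by rcases hcond with ⟨a,b,c,d⟩|⟨a,b,c,d⟩ <;> linarith)
  refine ⟨(2:ℝ≥0∞)^(|s1|+|s2|+|s3|) * ((2:ℝ≥0∞)^(5:ℝ) * (C1+C2+C3+C4+C5+C6)), ?_,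
    fun U V W hU hV hW => ?_⟩
  · refine ENNReal.mul_ne_top two_rpow_ne_top (ENNReal.mul_ne_top two_rpow_ne_top ?_)
    refine ENNReal.add_ne_top.2 ⟨ENNReal.add_ne_top.2 ⟨ENNReal.add_ne_top.2
      ⟨ENNReal.add_ne_top.2 ⟨ENNReal.add_ne_top.2 ⟨hC1, hC2⟩, hC3⟩, hC4⟩, hC5⟩, hC6⟩
  set A : K3 → ℝ≥0∞ := fun k => eN k ^ s1 * U k with hAdef
  set Bf : K3 → ℝ≥0∞ := fun k => eN k ^ (s2+1) * V k with hBdef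
  set Gf : K3 → ℝ≥0∞ := fun k => eN k ^ s3 * W k with hGdef
  have hA0 : A 0 = 0 := by rw [hAdef]; simp [hU]
  have hB0 : Bf 0 = 0 := by rw [hBdef]; simp [hV]
  have hG0 : Gf 0 = 0 := by rw [hGdef]; simp [hW]
  set α : ℕ → ℝ≥0∞ := fun p => (shsq A p)^((1:ℝ)/2) with hαdef
  set β : ℕ → ℝ≥0∞ := fun p => (shsq Bf p)^((1:ℝ)/2) with hβdef
  set γ : ℕ → ℝ≥0∞ := fun p => (shsq Gf p)^((1:ℝ)/2) with hγdef
  -- pointwise dyadic decomposition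
  have hpt : ∀ km : K3 × K3, U km.1 * ((eN km.2 * V km.2) * W (-(km.1+km.2)))
      ≤ ∑' v : ℕ×ℕ×ℕ, (2:ℝ≥0∞)^(|s1|+|s2|+|s3|)
          * ((2:ℝ≥0∞)^(-(s1*v.1 + s2*v.2.1 + s3*v.2.2))
          * ((chsh v.1 km.1 * A km.1) * ((chsh v.2.1 km.2 * Bf km.2)
            * (chsh v.2.2 (-(km.1+km.2)) * Gf (-(km.1+km.2)))))) := by
    rintro ⟨k, m⟩
    by_cases hk : k = 0
    · rw [hk, hU, zero_mul]
      exact zero_le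
    by_cases hm : m = 0
    · rw [hm, hV, mul_zero, zero_mul, mul_zero]
      exact zero_le
    by_cases hn : (-(k+m) : K3) = 0
    · rw [hn, hW, mul_zero, mul_zero]
      exact zero_le
    refine le_trans ?_ (ENNReal.le_tsum ((dsh k, dsh m, dsh (-(k+m))) : ℕ×ℕ×ℕ))
    have hch1 : chsh (dsh k) k = 1 := if_pos ⟨rfl, hk⟩
    have hch2 : chsh (dsh m) m = 1 := if_pos ⟨rfl, hm⟩
    have hch3 : chsh (dsh (-(k+m))) (-(k+m)) = 1 := if_pos ⟨rfl, hn⟩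
    have hUk : U k ≤ (2:ℝ≥0∞)^|s1| * ((2:ℝ≥0∞)^(-(s1 * (dsh k : ℝ))) * A k) := by
      have hw := wt s1 (eN_ne_zero hk) (eN_shell_le hk) (eN_shell_lt (k := k))
      calc U k = (eN k ^ (-s1) * eN k ^ s1) * U k := by
            rw [← ENNReal.rpow_add _ _ (eN_ne_zero hk) eN_ne_top]
            norm_num
        _ = eN k ^ (-s1) * A k := by rw [hAdef]; ring
        _ ≤ ((2:ℝ≥0∞)^|s1| * (2:ℝ≥0∞)^(-(s1 * (dsh k : ℝ)))) * A k := mul_le_mul' hw le_rfl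
        _ = _ := by ring
    have hVm : eN m * V m ≤ (2:ℝ≥0∞)^|s2| * ((2:ℝ≥0∞)^(-(s2 * (dsh m : ℝ))) * Bf m) := by
      have hw := wt s2 (eN_ne_zero hm) (eN_shell_le hm) (eN_shell_lt (k := m))
      calc eN m * V m = (eN m ^ (-s2) * eN m ^ (s2+1)) * V m := by
            rw [← ENNReal.rpow_add _ _ (eN_ne_zero hm) eN_ne_top]
            norm_num
        _ = eN m ^ (-s2) * Bf m := by rw [hBdef]; ring
        _ ≤ ((2:ℝ≥0∞)^|s2| * (2:ℝ≥0∞)^(-(s2 * (dsh m : ℝ)))) * Bf m := mul_le_mul' hw le_rfl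
        _ = _ := by ring
    have hWn : W (-(k+m)) ≤ (2:ℝ≥0∞)^|s3|
        * ((2:ℝ≥0∞)^(-(s3 * (dsh (-(k+m)) : ℝ))) * Gf (-(k+m))) := by
      have hw := wt s3 (eN_ne_zero hn) (eN_shell_le hn) (eN_shell_lt (k := -(k+m)))
      calc W (-(k+m)) = (eN (-(k+m)) ^ (-s3) * eN (-(k+m)) ^ s3) * W (-(k+m)) := by
            rw [← ENNReal.rpow_add _ _ (eN_ne_zero hn) eN_ne_top]
            norm_num
        _ = eN (-(k+m)) ^ (-s3) * Gf (-(k+m)) := by rw [hGdef]; ring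
        _ ≤ ((2:ℝ≥0∞)^|s3| * (2:ℝ≥0∞)^(-(s3 * (dsh (-(k+m)) : ℝ)))) * Gf (-(k+m)) :=
            mul_le_mul' hw le_rfl
        _ = _ := by ring
    calc U k * ((eN m * V m) * W (-(k+m)))
        ≤ ((2:ℝ≥0∞)^|s1| * ((2:ℝ≥0∞)^(-(s1 * (dsh k : ℝ))) * A k))
          * (((2:ℝ≥0∞)^|s2| * ((2:ℝ≥0∞)^(-(s2 * (dsh m : ℝ))) * Bf m))
            * ((2:ℝ≥0∞)^|s3| * ((2:ℝ≥0∞)^(-(s3 * (dsh (-(k+m)) : ℝ))) * Gf (-(k+m))))) :=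
          mul_le_mul' hUk (mul_le_mul' hVm hWn)
      _ = ((2:ℝ≥0∞)^|s1| * (2:ℝ≥0∞)^|s2| * (2:ℝ≥0∞)^|s3|)
          * (((2:ℝ≥0∞)^(-(s1 * (dsh k : ℝ))) * (2:ℝ≥0∞)^(-(s2 * (dsh m : ℝ)))
              * (2:ℝ≥0∞)^(-(s3 * (dsh (-(k+m)) : ℝ))))
            * (A k * (Bf m * Gf (-(k+m))))) := by ring
      _ = (2:ℝ≥0∞)^(|s1|+|s2|+|s3|)
          * ((2:ℝ≥0∞)^(-(s1*(dsh k : ℝ) + s2*(dsh m : ℝ) + s3*(dsh (-(k+m)) : ℝ)))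
            * (A k * (Bf m * Gf (-(k+m))))) := by
          rw [hmul2, hmul2, hmul2, hmul2]
          congr 2
          ring
      _ = (2:ℝ≥0∞)^(|s1|+|s2|+|s3|)
          * ((2:ℝ≥0∞)^(-(s1*(dsh k : ℝ) + s2*(dsh m : ℝ) + s3*(dsh (-(k+m)) : ℝ)))
          * ((chsh (dsh k) k * A k) * ((chsh (dsh m) m * Bf m)
            * (chsh (dsh (-(k+m))) (-(k+m)) * Gf (-(k+m)))))) := by
          rw [hch1, hch2, hch3, one_mul, one_mul, one_mul]
  -- abbreviations (explicit forms)
  -- swap the sums and pull out constants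
  have hswap : (∑' km : K3 × K3, U km.1 * ((eN km.2 * V km.2) * W (-(km.1+km.2))))
      ≤ ∑' v : ℕ×ℕ×ℕ, (2:ℝ≥0∞)^(|s1|+|s2|+|s3|)
          * ((2:ℝ≥0∞)^(-(s1*v.1 + s2*v.2.1 + s3*v.2.2))
          * ∑' km : K3 × K3, ((chsh v.1 km.1 * A km.1) * ((chsh v.2.1 km.2 * Bf km.2)
            * (chsh v.2.2 (-(km.1+km.2)) * Gf (-(km.1+km.2)))))) := by
    refine (ENNReal.tsum_le_tsum hpt).trans ?_
    rw [ENNReal.tsum_comm]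
    refine le_of_eq (tsum_congr fun v => ?_)
    rw [ENNReal.tsum_mul_left, ENNReal.tsum_mul_left]
  -- apply the shell bound
  have hsp : ∀ v : ℕ×ℕ×ℕ, (2:ℝ≥0∞)^(|s1|+|s2|+|s3|)
        * ((2:ℝ≥0∞)^(-(s1*v.1 + s2*v.2.1 + s3*v.2.2))
        * ∑' km : K3 × K3, ((chsh v.1 km.1 * A km.1) * ((chsh v.2.1 km.2 * Bf km.2)
          * (chsh v.2.2 (-(km.1+km.2)) * Gf (-(km.1+km.2))))))
      ≤ (2:ℝ≥0∞)^(|s1|+|s2|+|s3|) * ((2:ℝ≥0∞)^(5:ℝ)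
        * ((if AdmP v.1 v.2.1 v.2.2 then (1:ℝ≥0∞) else 0)
          * (2:ℝ≥0∞)^(3*((min v.1 (min v.2.1 v.2.2) : ℕ):ℝ)/2 - (s1*v.1 + s2*v.2.1 + s3*v.2.2))
          * ((shsq A v.1)^((1:ℝ)/2) * ((shsq Bf v.2.1)^((1:ℝ)/2) * (shsq Gf v.2.2)^((1:ℝ)/2)))))
      := by
    intro v
    refine mul_le_mul' le_rfl ?_
    refine (mul_le_mul' le_rfl (Spqr_le A Bf Gf v.1 v.2.1 v.2.2)).trans (le_of_eq ?_)
    have h2 : (2:ℝ≥0∞)^(-(s1*(v.1:ℝ) + s2*v.2.1 + s3*v.2.2))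
          * (2:ℝ≥0∞)^(3*((min v.1 (min v.2.1 v.2.2) : ℕ):ℝ)/2)
        = (2:ℝ≥0∞)^(3*((min v.1 (min v.2.1 v.2.2) : ℕ):ℝ)/2
            - (s1*v.1 + s2*v.2.1 + s3*v.2.2)) := by
      rw [hmul2]
      congr 1
      ring
    calc (2:ℝ≥0∞)^(-(s1*(v.1:ℝ) + s2*v.2.1 + s3*v.2.2))
          * ((if AdmP v.1 v.2.1 v.2.2 then (1:ℝ≥0∞) else 0) * ((2:ℝ≥0∞)^(5:ℝ)
            * (2:ℝ≥0∞)^(3*((min v.1 (min v.2.1 v.2.2) : ℕ):ℝ)/2)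
            * ((shsq A v.1)^((1:ℝ)/2) * ((shsq Bf v.2.1)^((1:ℝ)/2) * (shsq Gf v.2.2)^((1:ℝ)/2)))))
        = ((2:ℝ≥0∞)^(-(s1*(v.1:ℝ) + s2*v.2.1 + s3*v.2.2))
            * (2:ℝ≥0∞)^(3*((min v.1 (min v.2.1 v.2.2) : ℕ):ℝ)/2))
          * ((if AdmP v.1 v.2.1 v.2.2 then (1:ℝ≥0∞) else 0) * ((2:ℝ≥0∞)^(5:ℝ)
            * ((shsq A v.1)^((1:ℝ)/2) * ((shsq Bf v.2.1)^((1:ℝ)/2) * (shsq Gf v.2.2)^((1:ℝ)/2)))))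
          := by ring
      _ = _ := by rw [h2]; ring
  -- the six regional integrands
  have e2inv : Function.Involutive (fun v : ℕ×ℕ×ℕ => ((v.1, v.2.2, v.2.1) : ℕ×ℕ×ℕ)) :=
    fun v => rfl
  have e3inv : Function.Involutive (fun v : ℕ×ℕ×ℕ => ((v.2.1, v.1, v.2.2) : ℕ×ℕ×ℕ)) :=
    fun v => rfl
  have e6inv : Function.Involutive (fun v : ℕ×ℕ×ℕ => ((v.2.2, v.2.1, v.1) : ℕ×ℕ×ℕ)) :=
    fun v => rfl
  let ecyc : (ℕ×ℕ×ℕ) ≃ (ℕ×ℕ×ℕ) :=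
    ⟨fun v => (v.2.1, v.2.2, v.1), fun v => (v.2.2, v.1, v.2.1), fun v => rfl, fun v => rfl⟩
  set αf : ℕ → ℝ≥0∞ := fun p => (shsq A p)^((1:ℝ)/2) with hαdef2
  set βf : ℕ → ℝ≥0∞ := fun p => (shsq Bf p)^((1:ℝ)/2) with hβdef2
  set γf : ℕ → ℝ≥0∞ := fun p => (shsq Gf p)^((1:ℝ)/2) with hγdef2
  set T1 : ℕ×ℕ×ℕ → ℝ≥0∞ := fun v => (if v.1 ≤ v.2.1 ∧ v.2.1 ≤ v.2.2 ∧ v.2.2 ≤ v.2.1 + 2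
      then (1:ℝ≥0∞) else 0)
    * (2:ℝ≥0∞)^((3/2 - s1) * v.1 - s2 * v.2.1 - s3 * v.2.2) * (αf v.1 * (βf v.2.1 * γf v.2.2))
    with hT1
  set T2 : ℕ×ℕ×ℕ → ℝ≥0∞ := fun v => (if v.1 ≤ v.2.2 ∧ v.2.2 ≤ v.2.1 ∧ v.2.1 ≤ v.2.2 + 2
      then (1:ℝ≥0∞) else 0)
    * (2:ℝ≥0∞)^((3/2 - s1) * v.1 - s3 * v.2.2 - s2 * v.2.1) * (αf v.1 * (γf v.2.2 * βf v.2.1))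
    with hT2
  set T3 : ℕ×ℕ×ℕ → ℝ≥0∞ := fun v => (if v.2.1 ≤ v.1 ∧ v.1 ≤ v.2.2 ∧ v.2.2 ≤ v.1 + 2
      then (1:ℝ≥0∞) else 0)
    * (2:ℝ≥0∞)^((3/2 - s2) * v.2.1 - s1 * v.1 - s3 * v.2.2) * (βf v.2.1 * (αf v.1 * γf v.2.2))
    with hT3
  set T4 : ℕ×ℕ×ℕ → ℝ≥0∞ := fun v => (if v.2.1 ≤ v.2.2 ∧ v.2.2 ≤ v.1 ∧ v.1 ≤ v.2.2 + 2
      then (1:ℝ≥0∞) else 0)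
    * (2:ℝ≥0∞)^((3/2 - s2) * v.2.1 - s3 * v.2.2 - s1 * v.1) * (βf v.2.1 * (γf v.2.2 * αf v.1))
    with hT4
  set T5 : ℕ×ℕ×ℕ → ℝ≥0∞ := fun v => (if v.2.2 ≤ v.1 ∧ v.1 ≤ v.2.1 ∧ v.2.1 ≤ v.1 + 2
      then (1:ℝ≥0∞) else 0)
    * (2:ℝ≥0∞)^((3/2 - s3) * v.2.2 - s1 * v.1 - s2 * v.2.1) * (γf v.2.2 * (αf v.1 * βf v.2.1))
    with hT5
  set T6 : ℕ×ℕ×ℕ → ℝ≥0∞ := fun v => (if v.2.2 ≤ v.2.1 ∧ v.2.1 ≤ v.1 ∧ v.1 ≤ v.2.1 + 2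
      then (1:ℝ≥0∞) else 0)
    * (2:ℝ≥0∞)^((3/2 - s3) * v.2.2 - s2 * v.2.1 - s1 * v.1) * (γf v.2.2 * (βf v.2.1 * αf v.1))
    with hT6
  -- pointwise regional cover
  have hreg : ∀ v : ℕ×ℕ×ℕ, (if AdmP v.1 v.2.1 v.2.2 then (1:ℝ≥0∞) else 0)
        * (2:ℝ≥0∞)^(3*((min v.1 (min v.2.1 v.2.2) : ℕ):ℝ)/2 - (s1*v.1 + s2*v.2.1 + s3*v.2.2))
        * (αf v.1 * (βf v.2.1 * γf v.2.2))
      ≤ T1 v + (T2 v + (T3 v + (T4 v + (T5 v + T6 v)))) := by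
    intro v
    by_cases hadm : AdmP v.1 v.2.1 v.2.2
    swap
    · rw [if_neg hadm, zero_mul, zero_mul]
      exact zero_le
    obtain ⟨a1, a2, a3⟩ := hadm
    rcases le_total v.1 v.2.1 with h12 | h12 <;> rcases le_total v.2.1 v.2.2 with h23 | h23 <;>
      rcases le_total v.1 v.2.2 with h13 | h13
    · -- p ≤ q ≤ r : T1
      have hr : v.2.2 ≤ v.2.1 + 2 := by rcases a3 with h | h <;> omega
      have hminv : min v.1 (min v.2.1 v.2.2) = v.1 := by omega
      have hstep : (if AdmP v.1 v.2.1 v.2.2 then (1:ℝ≥0∞) else 0)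
            * (2:ℝ≥0∞)^(3*((min v.1 (min v.2.1 v.2.2) : ℕ):ℝ)/2 - (s1*v.1+s2*v.2.1+s3*v.2.2))
            * (αf v.1 * (βf v.2.1 * γf v.2.2)) = T1 v := by
        rw [hminv, if_pos (show AdmP v.1 v.2.1 v.2.2 from ⟨a1, a2, a3⟩)]
        simp only [hT1]
        rw [if_pos (show _ ∧ _ ∧ _ from ⟨h12, h23, hr⟩)]
        congr 2
        push_cast
        ring
      rw [hstep]
      exact le_self_add
    · -- degenerate p ≤ q ≤ r, r ≤ p : T1
      have hr : v.2.2 ≤ v.2.1 + 2 := by omega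
      have hminv : min v.1 (min v.2.1 v.2.2) = v.1 := by omega
      have hstep : (if AdmP v.1 v.2.1 v.2.2 then (1:ℝ≥0∞) else 0)
            * (2:ℝ≥0∞)^(3*((min v.1 (min v.2.1 v.2.2) : ℕ):ℝ)/2 - (s1*v.1+s2*v.2.1+s3*v.2.2))
            * (αf v.1 * (βf v.2.1 * γf v.2.2)) = T1 v := by
        rw [hminv, if_pos (show AdmP v.1 v.2.1 v.2.2 from ⟨a1, a2, a3⟩)]
        simp only [hT1]
        rw [if_pos (show _ ∧ _ ∧ _ from ⟨h12, h23, hr⟩)]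
        congr 2
        push_cast
        ring
      rw [hstep]
      exact le_self_add
    · -- p ≤ r ≤ q : T2
      have hq : v.2.1 ≤ v.2.2 + 2 := by rcases a2 with h | h <;> omega
      have hminv : min v.1 (min v.2.1 v.2.2) = v.1 := by omega
      have hstep : (if AdmP v.1 v.2.1 v.2.2 then (1:ℝ≥0∞) else 0)
            * (2:ℝ≥0∞)^(3*((min v.1 (min v.2.1 v.2.2) : ℕ):ℝ)/2 - (s1*v.1+s2*v.2.1+s3*v.2.2))
            * (αf v.1 * (βf v.2.1 * γf v.2.2)) = T2 v := by
        rw [hminv, if_pos (show AdmP v.1 v.2.1 v.2.2 from ⟨a1, a2, a3⟩)]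
        simp only [hT2]
        rw [if_pos (show _ ∧ _ ∧ _ from ⟨h13, h23, hq⟩)]
        rw [show αf v.1 * (βf v.2.1 * γf v.2.2) = αf v.1 * (γf v.2.2 * βf v.2.1) by ring]
        congr 2
        push_cast
        ring
      rw [hstep]
      exact le_self_add.trans le_add_self
    · -- r ≤ p ≤ q : T5
      have hq : v.2.1 ≤ v.1 + 2 := by rcases a2 with h | h <;> omega
      have hminv : min v.1 (min v.2.1 v.2.2) = v.2.2 := by omega
      have hstep : (if AdmP v.1 v.2.1 v.2.2 then (1:ℝ≥0∞) else 0)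
            * (2:ℝ≥0∞)^(3*((min v.1 (min v.2.1 v.2.2) : ℕ):ℝ)/2 - (s1*v.1+s2*v.2.1+s3*v.2.2))
            * (αf v.1 * (βf v.2.1 * γf v.2.2)) = T5 v := by
        rw [hminv, if_pos (show AdmP v.1 v.2.1 v.2.2 from ⟨a1, a2, a3⟩)]
        simp only [hT5]
        rw [if_pos (show _ ∧ _ ∧ _ from ⟨h13, h12, hq⟩)]
        rw [show αf v.1 * (βf v.2.1 * γf v.2.2) = γf v.2.2 * (αf v.1 * βf v.2.1) by ring]
        congr 2
        push_cast
        ring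
      rw [hstep]
      exact le_self_add.trans (le_add_self.trans (le_add_self.trans
        (le_add_self.trans le_add_self)))
    · -- q ≤ p ≤ r : T3
      have hr : v.2.2 ≤ v.1 + 2 := by rcases a3 with h | h <;> omega
      have hminv : min v.1 (min v.2.1 v.2.2) = v.2.1 := by omega
      have hstep : (if AdmP v.1 v.2.1 v.2.2 then (1:ℝ≥0∞) else 0)
            * (2:ℝ≥0∞)^(3*((min v.1 (min v.2.1 v.2.2) : ℕ):ℝ)/2 - (s1*v.1+s2*v.2.1+s3*v.2.2))
            * (αf v.1 * (βf v.2.1 * γf v.2.2)) = T3 v := by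
        rw [hminv, if_pos (show AdmP v.1 v.2.1 v.2.2 from ⟨a1, a2, a3⟩)]
        simp only [hT3]
        rw [if_pos (show _ ∧ _ ∧ _ from ⟨h12, h13, hr⟩)]
        rw [show αf v.1 * (βf v.2.1 * γf v.2.2) = βf v.2.1 * (αf v.1 * γf v.2.2) by ring]
        congr 2
        push_cast
        ring
      rw [hstep]
      exact le_self_add.trans (le_add_self.trans le_add_self)
    · -- q ≤ r ≤ p : T4
      have hp : v.1 ≤ v.2.2 + 2 := by rcases a1 with h | h <;> omega
      have hminv : min v.1 (min v.2.1 v.2.2) = v.2.1 := by omega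
      have hstep : (if AdmP v.1 v.2.1 v.2.2 then (1:ℝ≥0∞) else 0)
            * (2:ℝ≥0∞)^(3*((min v.1 (min v.2.1 v.2.2) : ℕ):ℝ)/2 - (s1*v.1+s2*v.2.1+s3*v.2.2))
            * (αf v.1 * (βf v.2.1 * γf v.2.2)) = T4 v := by
        rw [hminv, if_pos (show AdmP v.1 v.2.1 v.2.2 from ⟨a1, a2, a3⟩)]
        simp only [hT4]
        rw [if_pos (show _ ∧ _ ∧ _ from ⟨h23, h13, hp⟩)]
        rw [show αf v.1 * (βf v.2.1 * γf v.2.2) = βf v.2.1 * (γf v.2.2 * αf v.1) by ring]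
        congr 2
        push_cast
        ring
      rw [hstep]
      exact le_self_add.trans (le_add_self.trans (le_add_self.trans le_add_self))
    · -- degenerate q ≤ p, r ≤ q, p ≤ r : T1
      have hr : v.2.2 ≤ v.2.1 + 2 := by omega
      have h12' : v.1 ≤ v.2.1 := by omega
      have h23' : v.2.1 ≤ v.2.2 := by omega
      have hminv : min v.1 (min v.2.1 v.2.2) = v.1 := by omega
      have hstep : (if AdmP v.1 v.2.1 v.2.2 then (1:ℝ≥0∞) else 0)
            * (2:ℝ≥0∞)^(3*((min v.1 (min v.2.1 v.2.2) : ℕ):ℝ)/2 - (s1*v.1+s2*v.2.1+s3*v.2.2))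
            * (αf v.1 * (βf v.2.1 * γf v.2.2)) = T1 v := by
        rw [hminv, if_pos (show AdmP v.1 v.2.1 v.2.2 from ⟨a1, a2, a3⟩)]
        simp only [hT1]
        rw [if_pos (show _ ∧ _ ∧ _ from ⟨h12', h23', hr⟩)]
        congr 2
        push_cast
        ring
      rw [hstep]
      exact le_self_add
    · -- r ≤ q ≤ p : T6
      have hp : v.1 ≤ v.2.1 + 2 := by rcases a1 with h | h <;> omega
      have hminv : min v.1 (min v.2.1 v.2.2) = v.2.2 := by omega
      have hstep : (if AdmP v.1 v.2.1 v.2.2 then (1:ℝ≥0∞) else 0)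
            * (2:ℝ≥0∞)^(3*((min v.1 (min v.2.1 v.2.2) : ℕ):ℝ)/2 - (s1*v.1+s2*v.2.1+s3*v.2.2))
            * (αf v.1 * (βf v.2.1 * γf v.2.2)) = T6 v := by
        rw [hminv, if_pos (show AdmP v.1 v.2.1 v.2.2 from ⟨a1, a2, a3⟩)]
        simp only [hT6]
        rw [if_pos (show _ ∧ _ ∧ _ from ⟨h23, h12, hp⟩)]
        rw [show αf v.1 * (βf v.2.1 * γf v.2.2) = γf v.2.2 * (βf v.2.1 * αf v.1) by ring]
        congr 2
        push_cast
        ring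
      rw [hstep]
      exact le_add_self.trans (le_add_self.trans (le_add_self.trans
        (le_add_self.trans le_add_self)))
  -- regional sums
  have hS1 : (∑' v : ℕ×ℕ×ℕ, T1 v) ≤ C1 * (l2 αf * (l2 βf * l2 γf)) := hR1 αf βf γf
  have hS2 : (∑' v : ℕ×ℕ×ℕ, T2 v) ≤ C2 * (l2 αf * (l2 βf * l2 γf)) := by
    have heq : (∑' v : ℕ×ℕ×ℕ, T2 v) = ∑' w : ℕ×ℕ×ℕ,
        (if w.1 ≤ w.2.1 ∧ w.2.1 ≤ w.2.2 ∧ w.2.2 ≤ w.2.1 + 2 then (1:ℝ≥0∞) else 0)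
        * (2:ℝ≥0∞)^((3/2 - s1) * w.1 - s3 * w.2.1 - s2 * w.2.2)
        * (αf w.1 * (γf w.2.1 * βf w.2.2)) := by
      simp only [hT2]
      exact Equiv.tsum_eq (Function.Involutive.toPerm _ e2inv) (fun w => (if w.1 ≤ w.2.1 ∧ w.2.1 ≤ w.2.2 ∧ w.2.2 ≤ w.2.1 + 2 then (1:ℝ≥0∞) else 0) * (2:ℝ≥0∞)^((3/2 - s1) * w.1 - s3 * w.2.1 - s2 * w.2.2) * (αf w.1 * (γf w.2.1 * βf w.2.2)))
    rw [heq]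
    refine (hR2 αf γf βf).trans (le_of_eq ?_)
    ring
  have hS3 : (∑' v : ℕ×ℕ×ℕ, T3 v) ≤ C3 * (l2 αf * (l2 βf * l2 γf)) := by
    have heq : (∑' v : ℕ×ℕ×ℕ, T3 v) = ∑' w : ℕ×ℕ×ℕ,
        (if w.1 ≤ w.2.1 ∧ w.2.1 ≤ w.2.2 ∧ w.2.2 ≤ w.2.1 + 2 then (1:ℝ≥0∞) else 0)
        * (2:ℝ≥0∞)^((3/2 - s2) * w.1 - s1 * w.2.1 - s3 * w.2.2)
        * (βf w.1 * (αf w.2.1 * γf w.2.2)) := by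
      simp only [hT3]
      exact Equiv.tsum_eq (Function.Involutive.toPerm _ e3inv) (fun w => (if w.1 ≤ w.2.1 ∧ w.2.1 ≤ w.2.2 ∧ w.2.2 ≤ w.2.1 + 2 then (1:ℝ≥0∞) else 0) * (2:ℝ≥0∞)^((3/2 - s2) * w.1 - s1 * w.2.1 - s3 * w.2.2) * (βf w.1 * (αf w.2.1 * γf w.2.2)))
    rw [heq]
    refine (hR3 βf αf γf).trans (le_of_eq ?_)
    ring
  have hS4 : (∑' v : ℕ×ℕ×ℕ, T4 v) ≤ C4 * (l2 αf * (l2 βf * l2 γf)) := by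
    have heq : (∑' v : ℕ×ℕ×ℕ, T4 v) = ∑' w : ℕ×ℕ×ℕ,
        (if w.1 ≤ w.2.1 ∧ w.2.1 ≤ w.2.2 ∧ w.2.2 ≤ w.2.1 + 2 then (1:ℝ≥0∞) else 0)
        * (2:ℝ≥0∞)^((3/2 - s2) * w.1 - s3 * w.2.1 - s1 * w.2.2)
        * (βf w.1 * (γf w.2.1 * αf w.2.2)) := by
      simp only [hT4]
      exact Equiv.tsum_eq ecyc (fun w => (if w.1 ≤ w.2.1 ∧ w.2.1 ≤ w.2.2 ∧ w.2.2 ≤ w.2.1 + 2 then (1:ℝ≥0∞) else 0) * (2:ℝ≥0∞)^((3/2 - s2) * w.1 - s3 * w.2.1 - s1 * w.2.2) * (βf w.1 * (γf w.2.1 * αf w.2.2)))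
    rw [heq]
    refine (hR4 βf γf αf).trans (le_of_eq ?_)
    ring
  have hS5 : (∑' v : ℕ×ℕ×ℕ, T5 v) ≤ C5 * (l2 αf * (l2 βf * l2 γf)) := by
    have heq : (∑' v : ℕ×ℕ×ℕ, T5 v) = ∑' w : ℕ×ℕ×ℕ,
        (if w.1 ≤ w.2.1 ∧ w.2.1 ≤ w.2.2 ∧ w.2.2 ≤ w.2.1 + 2 then (1:ℝ≥0∞) else 0)
        * (2:ℝ≥0∞)^((3/2 - s3) * w.1 - s1 * w.2.1 - s2 * w.2.2)
        * (γf w.1 * (αf w.2.1 * βf w.2.2)) := by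
      simp only [hT5]
      exact Equiv.tsum_eq ecyc.symm (fun w => (if w.1 ≤ w.2.1 ∧ w.2.1 ≤ w.2.2 ∧ w.2.2 ≤ w.2.1 + 2 then (1:ℝ≥0∞) else 0) * (2:ℝ≥0∞)^((3/2 - s3) * w.1 - s1 * w.2.1 - s2 * w.2.2) * (γf w.1 * (αf w.2.1 * βf w.2.2)))
    rw [heq]
    refine (hR5 γf αf βf).trans (le_of_eq ?_)
    ring
  have hS6 : (∑' v : ℕ×ℕ×ℕ, T6 v) ≤ C6 * (l2 αf * (l2 βf * l2 γf)) := by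
    have heq : (∑' v : ℕ×ℕ×ℕ, T6 v) = ∑' w : ℕ×ℕ×ℕ,
        (if w.1 ≤ w.2.1 ∧ w.2.1 ≤ w.2.2 ∧ w.2.2 ≤ w.2.1 + 2 then (1:ℝ≥0∞) else 0)
        * (2:ℝ≥0∞)^((3/2 - s3) * w.1 - s2 * w.2.1 - s1 * w.2.2)
        * (γf w.1 * (βf w.2.1 * αf w.2.2)) := by
      simp only [hT6]
      exact Equiv.tsum_eq (Function.Involutive.toPerm _ e6inv) (fun w => (if w.1 ≤ w.2.1 ∧ w.2.1 ≤ w.2.2 ∧ w.2.2 ≤ w.2.1 + 2 then (1:ℝ≥0∞) else 0) * (2:ℝ≥0∞)^((3/2 - s3) * w.1 - s2 * w.2.1 - s1 * w.2.2) * (γf w.1 * (βf w.2.1 * αf w.2.2)))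
    rw [heq]
    refine (hR6 γf βf αf).trans (le_of_eq ?_)
    ring
  -- l2 of shell sequences
  have hl2α : l2 αf = l2 A := l2_shell A hA0
  have hl2β : l2 βf = l2 Bf := l2_shell Bf hB0
  have hl2γ : l2 γf = l2 Gf := l2_shell Gf hG0
  -- final assembly
  calc (∑' km : K3 × K3, U km.1 * ((eN km.2 * V km.2) * W (-(km.1+km.2))))
      ≤ ∑' v : ℕ×ℕ×ℕ, (2:ℝ≥0∞)^(|s1|+|s2|+|s3|)
          * ((2:ℝ≥0∞)^(-(s1*v.1 + s2*v.2.1 + s3*v.2.2))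
          * ∑' km : K3 × K3, ((chsh v.1 km.1 * A km.1) * ((chsh v.2.1 km.2 * Bf km.2)
            * (chsh v.2.2 (-(km.1+km.2)) * Gf (-(km.1+km.2)))))) := hswap
    _ ≤ ∑' v : ℕ×ℕ×ℕ, (2:ℝ≥0∞)^(|s1|+|s2|+|s3|) * ((2:ℝ≥0∞)^(5:ℝ)
          * ((if AdmP v.1 v.2.1 v.2.2 then (1:ℝ≥0∞) else 0)
          * (2:ℝ≥0∞)^(3*((min v.1 (min v.2.1 v.2.2) : ℕ):ℝ)/2 - (s1*v.1 + s2*v.2.1 + s3*v.2.2))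
          * (αf v.1 * (βf v.2.1 * γf v.2.2)))) := ENNReal.tsum_le_tsum hsp
    _ ≤ ∑' v : ℕ×ℕ×ℕ, (2:ℝ≥0∞)^(|s1|+|s2|+|s3|) * ((2:ℝ≥0∞)^(5:ℝ)
          * (T1 v + (T2 v + (T3 v + (T4 v + (T5 v + T6 v)))))) :=
        ENNReal.tsum_le_tsum (fun v => mul_le_mul' le_rfl (mul_le_mul' le_rfl (hreg v)))
    _ = (2:ℝ≥0∞)^(|s1|+|s2|+|s3|) * ((2:ℝ≥0∞)^(5:ℝ)
          * ((∑' v : ℕ×ℕ×ℕ, T1 v) + ((∑' v : ℕ×ℕ×ℕ, T2 v) + ((∑' v : ℕ×ℕ×ℕ, T3 v)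
            + ((∑' v : ℕ×ℕ×ℕ, T4 v) + ((∑' v : ℕ×ℕ×ℕ, T5 v) + (∑' v : ℕ×ℕ×ℕ, T6 v))))))) := by
        rw [ENNReal.tsum_mul_left, ENNReal.tsum_mul_left, ENNReal.tsum_add, ENNReal.tsum_add,
          ENNReal.tsum_add, ENNReal.tsum_add, ENNReal.tsum_add]
    _ ≤ (2:ℝ≥0∞)^(|s1|+|s2|+|s3|) * ((2:ℝ≥0∞)^(5:ℝ)
          * ((C1 * (l2 αf * (l2 βf * l2 γf))) + ((C2 * (l2 αf * (l2 βf * l2 γf)))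
            + ((C3 * (l2 αf * (l2 βf * l2 γf))) + ((C4 * (l2 αf * (l2 βf * l2 γf)))
            + ((C5 * (l2 αf * (l2 βf * l2 γf))) + (C6 * (l2 αf * (l2 βf * l2 γf))))))))) := by
        refine mul_le_mul' le_rfl (mul_le_mul' le_rfl ?_)
        exact add_le_add hS1 (add_le_add hS2 (add_le_add hS3 (add_le_add hS4
          (add_le_add hS5 hS6))))
    _ = (2:ℝ≥0∞)^(|s1|+|s2|+|s3|) * ((2:ℝ≥0∞)^(5:ℝ) * (C1+C2+C3+C4+C5+C6))
          * (l2 αf * (l2 βf * l2 γf)) := by ring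
    _ = _ := by rw [hl2α, hl2β, hl2γ]




lemma coefNormSq_nonneg (c : Fin 3 → ℂ) : 0 ≤ coefNormSq c :=
  Finset.sum_nonneg fun i _ => sq_nonneg _

lemma coefNormSq_zero : coefNormSq (0 : Fin 3 → ℂ) = 0 := by
  simp [coefNormSq]

lemma normVsq_nonneg (L s : ℝ) (x : Coeff) : 0 ≤ normVsq L s x :=
  tsum_nonneg fun k => mul_nonneg (Real.rpow_nonneg (Real.sqrt_nonneg _) _)
    (coefNormSq_nonneg _)

lemma normV_nonneg (L s : ℝ) (x : Coeff) : 0 ≤ normV L s x := Real.sqrt_nonneg _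

lemma Nk_zero : Nk (0 : K3) = 0 := by
  simp [Nk]

lemma zetaNorm_eq (L : ℝ) (hL : 0 < L) (k : K3) :
    zetaNorm L k = (2 * Real.pi / L) * Nk k := by
  have hc0 : 0 < 2 * Real.pi / L := by positivity
  have h1 : zetaNormSq L k = (2 * Real.pi / L)^2 * (∑ i, ((k i : ℝ))^2) := by
    rw [zetaNormSq, Finset.mul_sum]
    refine Finset.sum_congr rfl fun i _ => ?_
    rw [zeta]
    ring
  rw [zetaNorm, h1, Real.sqrt_mul (by positivity), Real.sqrt_sq hc0.le, Nk]

lemma zetaNorm_nonneg (L : ℝ) (k : K3) : 0 ≤ zetaNorm L k := Real.sqrt_nonneg _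

/-- real Cauchy-Schwarz on `Fin 3` -/
lemma cs3 (f g : Fin 3 → ℝ) (hf : ∀ i, 0 ≤ f i) (hg : ∀ i, 0 ≤ g i) :
    (∑ i, f i * g i) ≤ Real.sqrt (∑ i, f i^2) * Real.sqrt (∑ i, g i^2) := by
  have h := Finset.sum_mul_sq_le_sq_mul_sq Finset.univ f g
  have hnn : 0 ≤ ∑ i, f i * g i :=
    Finset.sum_nonneg fun i _ => mul_nonneg (hf i) (hg i)
  calc (∑ i, f i * g i) = Real.sqrt ((∑ i, f i * g i)^2) := (Real.sqrt_sq hnn).symm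
    _ ≤ Real.sqrt ((∑ i, f i^2) * (∑ i, g i^2)) := Real.sqrt_le_sqrt h
    _ = _ := Real.sqrt_mul (Finset.sum_nonneg fun i _ => sq_nonneg _) _

/-- the `l2` norms appearing in `core` are the `V^s` norms up to scaling -/
lemma l2_ofReal (L : ℝ) (hL : 0 < L) (s : ℝ) (x : Coeff) (hx0 : x 0 = 0)
    (hsum : Summable fun k => zetaNorm L k ^ (2*s) * coefNormSq (x k)) :
    l2 (fun k => eN k ^ s * ENNReal.ofReal (Real.sqrt (coefNormSq (x k))))
      = ENNReal.ofReal ((2*Real.pi/L) ^ (-(2*s) : ℝ) * normVsq L s x) ^ ((1:ℝ)/2) := by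
  have hc0 : 0 < 2 * Real.pi / L := by positivity
  rw [l2]
  congr 1
  have hpt : ∀ k : K3, (eN k ^ s * ENNReal.ofReal (Real.sqrt (coefNormSq (x k)))) ^ (2:ℝ)
      = ENNReal.ofReal ((2*Real.pi/L) ^ (-(2*s) : ℝ)
          * (zetaNorm L k ^ (2*s) * coefNormSq (x k))) := by
    intro k
    by_cases hk : k = 0
    · subst hk
      rw [hx0, coefNormSq_zero]
      simp [ENNReal.zero_rpow_of_pos]
    · have hNk : 0 < Nk k := lt_of_lt_of_le one_pos (one_le_Nk hk)
      have e1 : eN k ^ s = ENNReal.ofReal (Nk k ^ s) := by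
        rw [eN, ← ENNReal.ofReal_rpow_of_pos hNk]
      rw [e1, ← ENNReal.ofReal_mul (by positivity),
        ENNReal.ofReal_rpow_of_nonneg (by positivity) (by norm_num : (0:ℝ) ≤ 2)]
      congr 1
      have e2 : zetaNorm L k ^ (2*s) = (2*Real.pi/L) ^ (2*s) * Nk k ^ (2*s) := by
        rw [zetaNorm_eq L hL, Real.mul_rpow hc0.le (Nk_nonneg k)]
      rw [e2]
      have ha : (Nk k ^ s) ^ (2:ℝ) = Nk k ^ (2*s) := by
        rw [← Real.rpow_mul (Nk_nonneg k)]
        congr 1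
        ring
      have hb : (Real.sqrt (coefNormSq (x k))) ^ (2:ℝ) = coefNormSq (x k) := by
        rw [show (2:ℝ) = ((2:ℕ):ℝ) by norm_num, Real.rpow_natCast,
          Real.sq_sqrt (coefNormSq_nonneg _)]
      have e3 : (Nk k ^ s * Real.sqrt (coefNormSq (x k))) ^ (2:ℝ)
          = Nk k ^ (2*s) * coefNormSq (x k) := by
        rw [Real.mul_rpow (Real.rpow_nonneg (Nk_nonneg k) _) (Real.sqrt_nonneg _), ha, hb]
      rw [e3]
      have e4 : (2*Real.pi/L) ^ (-(2*s) : ℝ) * (2*Real.pi/L) ^ (2*s) = 1 := by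
        rw [← Real.rpow_add hc0]
        norm_num
      calc Nk k ^ (2*s) * coefNormSq (x k)
          = ((2*Real.pi/L) ^ (-(2*s) : ℝ) * (2*Real.pi/L) ^ (2*s))
            * (Nk k ^ (2*s) * coefNormSq (x k)) := by rw [e4, one_mul]
        _ = _ := by ring
  rw [tsum_congr hpt, ← ofReal_tsum_of_nonneg (fun k => mul_nonneg
      (Real.rpow_nonneg (by positivity) _) (mul_nonneg
      (Real.rpow_nonneg (zetaNorm_nonneg _ _) _) (coefNormSq_nonneg _)))
      (hsum.mul_left _), normVsq, tsum_mul_left]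

set_option maxHeartbeats 1000000 in
theorem trilinear_estimate' (L s1 s2 s3 : ℝ) (hL : 0 < L)
    (hcond : (0 ≤ s1 + s2 ∧ 0 ≤ s1 + s3 ∧ 0 ≤ s2 + s3 ∧ 3 / 2 < s1 + s2 + s3) ∨
      (0 < s1 + s2 ∧ 0 < s1 + s3 ∧ 0 < s2 + s3 ∧ 3 / 2 ≤ s1 + s2 + s3)) :
    ∃ c : ℝ, 0 < c ∧ ∀ u v w : Coeff, MemV L s1 u → MemV L (s2 + 1) v → MemV L s3 w →
      ‖btri L u v w‖ ≤ c * normV L s1 u * normV L (s2 + 1) v * normV L s3 w := by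
  set c0 : ℝ := 2 * Real.pi / L with hc0def
  have hc0 : 0 < c0 := by rw [hc0def]; positivity
  obtain ⟨C, hCtop, hC⟩ := core (s1 := s1) (s2 := s2) (s3 := s3) hcond
  refine ⟨L^3 * (c0 * C.toReal * ((c0 ^ (-s1 : ℝ)) * ((c0 ^ (-(s2+1) : ℝ)) * (c0 ^ (-s3 : ℝ))))) + 1,
    ?_, fun u v w hu hv hw => ?_⟩
  · have h1 : (0:ℝ) ≤ L^3 * (c0 * C.toReal * ((c0 ^ (-s1 : ℝ)) * ((c0 ^ (-(s2+1) : ℝ)) * (c0 ^ (-s3 : ℝ))))) := by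
      have := ENNReal.toReal_nonneg (a := C)
      positivity
    linarith
  · -- main estimate
    set n1 : ℝ := normV L s1 u with hn1
    set n2 : ℝ := normV L (s2+1) v with hn2
    set n3 : ℝ := normV L s3 w with hn3
    set Ur : K3 → ℝ := fun k => Real.sqrt (coefNormSq (u k)) with hUr
    set Vr : K3 → ℝ := fun k => Real.sqrt (coefNormSq (v k)) with hVr
    set Wr : K3 → ℝ := fun k => Real.sqrt (coefNormSq (w k)) with hWr
    set h : K3 × K3 → ℂ := fun km => ∑ i, ∑ j,
      u km.1 j * (Complex.I * (zeta L km.2 j : ℂ)) * v km.2 i * w (-(km.1 + km.2)) i with hh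
    -- termwise bound
    have hterm : ∀ km : K3 × K3, ‖h km‖
        ≤ c0 * (Ur km.1 * ((Nk km.2 * Vr km.2) * Wr (-(km.1+km.2)))) := by
      rintro ⟨k, m⟩
      have hfac : h (k, m) = Complex.I * ((∑ j, u k j * (zeta L m j : ℂ))
          * (∑ i, v m i * w (-(k+m)) i)) := by
        rw [hh]
        calc (∑ i, ∑ j, u k j * (Complex.I * (zeta L m j : ℂ)) * v m i * w (-(k+m)) i)
            = ∑ i, ∑ j, Complex.I * ((u k j * (zeta L m j : ℂ)) * (v m i * w (-(k+m)) i)) := by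
              refine Finset.sum_congr rfl fun i _ => Finset.sum_congr rfl fun j _ => by ring
          _ = Complex.I * ∑ i, ∑ j, (u k j * (zeta L m j : ℂ)) * (v m i * w (-(k+m)) i) := by
              simp only [← Finset.mul_sum]
          _ = _ := by
              congr 1
              rw [Finset.sum_mul_sum]
              exact Finset.sum_comm
      rw [hfac]
      have habs : ‖Complex.I * ((∑ j, u k j * (zeta L m j : ℂ))
            * (∑ i, v m i * w (-(k+m)) i))‖
          = ‖(∑ j, u k j * (zeta L m j : ℂ))‖ * ‖(∑ i, v m i * w (-(k+m)) i)‖ := by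
        rw [norm_mul, norm_mul, Complex.norm_I, one_mul]
      rw [habs]
      have hS1 : ‖(∑ j, u k j * (zeta L m j : ℂ))‖ ≤ Ur k * zetaNorm L m := by
        refine (norm_sum_le _ _).trans ?_
        have hstep : ∀ j : Fin 3, ‖u k j * (zeta L m j : ℂ)‖
            = ‖u k j‖ * |zeta L m j| := by
          intro j
          rw [norm_mul, Complex.norm_real, Real.norm_eq_abs]
        rw [Finset.sum_congr rfl (fun j _ => hstep j)]
        refine (cs3 _ _ (fun j => norm_nonneg _) (fun j => abs_nonneg _)).trans ?_
        rw [hUr]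
        have e1 : (∑ j, ‖u k j‖^2) = coefNormSq (u k) := rfl
        have e2 : (∑ j, |zeta L m j|^2) = zetaNormSq L m := by
          refine Finset.sum_congr rfl fun j _ => by rw [sq_abs]
        rw [e1, e2]
        rfl
      have hS2 : ‖(∑ i, v m i * w (-(k+m)) i)‖ ≤ Vr m * Wr (-(k+m)) := by
        refine (norm_sum_le _ _).trans ?_
        have hstep : ∀ i : Fin 3, ‖v m i * w (-(k+m)) i‖
            = ‖v m i‖ * ‖w (-(k+m)) i‖ := by
          intro i
          rw [norm_mul]
        rw [Finset.sum_congr rfl (fun i _ => hstep i)]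
        refine (cs3 _ _ (fun i => norm_nonneg _)
          (fun i => norm_nonneg _)).trans ?_
        rw [hVr, hWr]
        rfl
      calc ‖(∑ j, u k j * (zeta L m j : ℂ))‖ * ‖(∑ i, v m i * w (-(k+m)) i)‖
          ≤ (Ur k * zetaNorm L m) * (Vr m * Wr (-(k+m))) := by
            refine mul_le_mul hS1 hS2 (norm_nonneg _) ?_
            exact mul_nonneg (Real.sqrt_nonneg _) (zetaNorm_nonneg _ _)
        _ = c0 * (Ur k * ((Nk m * Vr m) * Wr (-(k+m)))) := by
            rw [zetaNorm_eq L hL, hc0def]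
            ring
    have hUrn : ∀ k, 0 ≤ Ur k := fun k => by rw [hUr]; exact Real.sqrt_nonneg _
    have hVrn : ∀ k, 0 ≤ Vr k := fun k => by rw [hVr]; exact Real.sqrt_nonneg _
    have hWrn : ∀ k, 0 ≤ Wr k := fun k => by rw [hWr]; exact Real.sqrt_nonneg _
    set Ue : K3 → ℝ≥0∞ := fun k => ENNReal.ofReal (Ur k) with hUe
    set Ve : K3 → ℝ≥0∞ := fun k => ENNReal.ofReal (Vr k) with hVe
    set We : K3 → ℝ≥0∞ := fun k => ENNReal.ofReal (Wr k) with hWe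
    have hUe0 : Ue 0 = 0 := by
      rw [hUe]
      simp [hUr, hu.mean_zero, coefNormSq_zero]
    have hVe0 : Ve 0 = 0 := by
      rw [hVe]
      simp [hVr, hv.mean_zero, coefNormSq_zero]
    have hWe0 : We 0 = 0 := by
      rw [hWe]
      simp [hWr, hw.mean_zero, coefNormSq_zero]
    have hE := hC Ue Ve We hUe0 hVe0 hWe0
    have hl2u : l2 (fun k => eN k ^ s1 * Ue k)
        = ENNReal.ofReal (c0 ^ (-(2*s1) : ℝ) * normVsq L s1 u) ^ ((1:ℝ)/2) := by
      rw [hUe]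
      simp only [hUr]
      rw [l2_ofReal L hL s1 u hu.mean_zero hu.norm_summable, hc0def]
    have hl2v : l2 (fun k => eN k ^ (s2+1) * Ve k)
        = ENNReal.ofReal (c0 ^ (-(2*(s2+1)) : ℝ) * normVsq L (s2+1) v) ^ ((1:ℝ)/2) := by
      rw [hVe]
      simp only [hVr]
      rw [l2_ofReal L hL (s2+1) v hv.mean_zero hv.norm_summable, hc0def]
    have hl2w : l2 (fun k => eN k ^ s3 * We k)
        = ENNReal.ofReal (c0 ^ (-(2*s3) : ℝ) * normVsq L s3 w) ^ ((1:ℝ)/2) := by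
      rw [hWe]
      simp only [hWr]
      rw [l2_ofReal L hL s3 w hw.mean_zero hw.norm_summable, hc0def]
    rw [hl2u, hl2v, hl2w] at hE
    set RHSe : ℝ≥0∞ := ENNReal.ofReal c0 * (C *
      ((ENNReal.ofReal (c0 ^ (-(2*s1) : ℝ) * normVsq L s1 u)) ^ ((1:ℝ)/2)
        * ((ENNReal.ofReal (c0 ^ (-(2*(s2+1)) : ℝ) * normVsq L (s2+1) v)) ^ ((1:ℝ)/2)
          * (ENNReal.ofReal (c0 ^ (-(2*s3) : ℝ) * normVsq L s3 w)) ^ ((1:ℝ)/2)))) with hRHSe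
    have hfin : RHSe ≠ ⊤ := by
      rw [hRHSe]
      refine ENNReal.mul_ne_top ENNReal.ofReal_ne_top (ENNReal.mul_ne_top hCtop
        (ENNReal.mul_ne_top (ENNReal.rpow_ne_top_of_nonneg (by norm_num) ENNReal.ofReal_ne_top)
          (ENNReal.mul_ne_top (ENNReal.rpow_ne_top_of_nonneg (by norm_num) ENNReal.ofReal_ne_top)
            (ENNReal.rpow_ne_top_of_nonneg (by norm_num) ENNReal.ofReal_ne_top))))
    -- pointwise ennreal bound
    have hpt2 : ∀ km : K3 × K3, ((‖h km‖₊ : ℝ≥0∞))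
        ≤ ENNReal.ofReal c0 * (Ue km.1 * ((eN km.2 * Ve km.2) * We (-(km.1+km.2)))) := by
      intro km
      rw [show ((‖h km‖₊ : ℝ≥0∞)) = ENNReal.ofReal ‖h km‖ from (ofReal_norm_eq_enorm _).symm]
      refine (ENNReal.ofReal_le_ofReal (hterm km)).trans (le_of_eq ?_)
      rw [ENNReal.ofReal_mul hc0.le, ENNReal.ofReal_mul (hUrn _),
        ENNReal.ofReal_mul (mul_nonneg (Nk_nonneg _) (hVrn _)),
        ENNReal.ofReal_mul (Nk_nonneg _)]
      rfl
    have htop : (∑' km : K3 × K3, ((‖h km‖₊ : ℝ≥0∞))) ≤ RHSe := by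
      refine (ENNReal.tsum_le_tsum hpt2).trans ?_
      rw [ENNReal.tsum_mul_left]
      exact mul_le_mul' le_rfl hE
    have hsum1 : Summable (fun km : K3 × K3 => ‖h km‖₊) :=
      ENNReal.tsum_coe_ne_top_iff_summable.1 (ne_top_of_le_ne_top hfin htop)
    have hsum2 : Summable (fun km : K3 × K3 => ‖h km‖) := by
      have := NNReal.summable_coe.2 hsum1
      simpa [coe_nnnorm] using this
    have hsumh : Summable h := hsum2.of_norm
    have hbtri : btri L u v w = (L:ℂ)^3 * ∑' km : K3 × K3, h km := by
      rw [btri]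
      congr 1
      exact (Summable.tsum_prod' hsumh (fun k => hsumh.prod_factor k)).symm
    have habs2 : ‖btri L u v w‖ ≤ L^3 * ∑' km : K3×K3, ‖h km‖ := by
      rw [hbtri, norm_mul, norm_pow, Complex.norm_real,
        Real.norm_eq_abs, abs_of_pos hL]
      exact mul_le_mul_of_nonneg_left (norm_tsum_le_tsum_norm hsum2) (by positivity)
    have hns : 0 ≤ ∑' km : K3×K3, ‖h km‖ := tsum_nonneg (fun _ => norm_nonneg _)
    have hreal : (∑' km : K3×K3, ‖h km‖) ≤ RHSe.toReal := by
      have h1 : ENNReal.ofReal (∑' km : K3×K3, ‖h km‖) ≤ RHSe := by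
        rw [ofReal_tsum_of_nonneg (fun _ => norm_nonneg _) hsum2]
        exact (le_of_eq (tsum_congr fun km => ofReal_norm_eq_enorm _)).trans htop
      calc (∑' km : K3×K3, ‖h km‖)
          = (ENNReal.ofReal (∑' km : K3×K3, ‖h km‖)).toReal := (ENNReal.toReal_ofReal hns).symm
        _ ≤ RHSe.toReal := ENNReal.toReal_mono hfin h1
    -- compute RHSe.toReal
    have hsq : ∀ s : ℝ, ∀ x : Coeff,
        ((ENNReal.ofReal (c0 ^ (-(2*s) : ℝ) * normVsq L s x)) ^ ((1:ℝ)/2)).toReal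
        = c0 ^ (-s : ℝ) * normV L s x := by
      intro s x
      rw [← ENNReal.toReal_rpow, ENNReal.toReal_ofReal
        (mul_nonneg (Real.rpow_nonneg hc0.le _) (normVsq_nonneg L s x))]
      rw [Real.mul_rpow (Real.rpow_nonneg hc0.le _) (normVsq_nonneg L s x)]
      congr 1
      · rw [← Real.rpow_mul hc0.le]
        congr 1
        ring
      · rw [normV, Real.sqrt_eq_rpow]
    have hto : RHSe.toReal = c0 * (C.toReal * ((c0 ^ (-s1 : ℝ) * normV L s1 u)
        * ((c0 ^ (-(s2+1) : ℝ) * normV L (s2+1) v) * (c0 ^ (-s3 : ℝ) * normV L s3 w)))) := by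
      rw [hRHSe, ENNReal.toReal_mul, ENNReal.toReal_mul, ENNReal.toReal_mul,
        ENNReal.toReal_mul, ENNReal.toReal_ofReal hc0.le, hsq s1 u, hsq (s2+1) v, hsq s3 w]
    calc ‖btri L u v w‖ ≤ L^3 * ∑' km : K3×K3, ‖h km‖ := habs2
      _ ≤ L^3 * RHSe.toReal := by
          refine mul_le_mul_of_nonneg_left hreal (by positivity)
      _ = (L^3 * (c0 * C.toReal * ((c0 ^ (-s1 : ℝ)) * ((c0 ^ (-(s2+1) : ℝ)) * (c0 ^ (-s3 : ℝ))))))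
            * n1 * n2 * n3 := by
          rw [hto, hn1, hn2, hn3]
          ring
      _ ≤ _ := by
          have h1 : 0 ≤ n1 := by rw [hn1]; exact normV_nonneg _ _ _
          have h2 : 0 ≤ n2 := by rw [hn2]; exact normV_nonneg _ _ _
          have h3 : 0 ≤ n3 := by rw [hn3]; exact normV_nonneg _ _ _
          have hK : (0:ℝ) ≤ L^3 * (c0 * C.toReal
              * ((c0 ^ (-s1 : ℝ)) * ((c0 ^ (-(s2+1) : ℝ)) * (c0 ^ (-s3 : ℝ))))) := by
            have := ENNReal.toReal_nonneg (a := C)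
            positivity
          nlinarith [mul_nonneg (mul_nonneg h1 h2) h3]



end AuxTrilinear

/-- Lemma 2.1. If `s₁,s₂,s₃ ∈ ℝ` satisfy either `sᵢ+sⱼ ≥ 0` for `i ≠ j` and
`s₁+s₂+s₃ > 3/2`, or `sᵢ+sⱼ > 0` for `i ≠ j` and `s₁+s₂+s₃ ≥ 3/2`, then the trilinear form `b`
extends continuously to `V^{s₁} × V^{s₂+1} × V^{s₃}`: there is a constant `c` such that
`|b(u,v,w)| ≤ c ‖u‖_{s₁} ‖v‖_{s₂+1} ‖w‖_{s₃}`. -/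
theorem trilinear_estimate (L s1 s2 s3 : ℝ) (hL : 0 < L)
    (hcond : (0 ≤ s1 + s2 ∧ 0 ≤ s1 + s3 ∧ 0 ≤ s2 + s3 ∧ 3 / 2 < s1 + s2 + s3) ∨
      (0 < s1 + s2 ∧ 0 < s1 + s3 ∧ 0 < s2 + s3 ∧ 3 / 2 ≤ s1 + s2 + s3)) :
    ∃ c : ℝ, 0 < c ∧ ∀ u v w : Coeff, MemV L s1 u → MemV L (s2 + 1) v → MemV L s3 w →
      ‖btri L u v w‖ ≤ c * normV L s1 u * normV L (s2 + 1) v * normV L s3 w := by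
  exact trilinear_estimate' L s1 s2 s3 hL hcond

end NS3D
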